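/- arXiv:1909.10658 — 4 statements merged into one kernel-verified Lean document; each statement's English description precedes it below -/
import Mathlib

section
/- Every width-w decision list L of size m on n variables can be ε-approximated by a sublist: there exists J ⊆ [m] with m ∈ J and |J| ≤ (2 + (1/w)·log_2(1/ε))^{Cw} for an absolute constant C, such that Pr_{x uniform}[L(x) ≠ L|_J(x)] ≤ ε. Moreover J can be taken to consist of the default rule together with the indices i having the largest hit probabilities p_L(i). -/
open Finset
open scoped Classical BigOperators

noncomputable section

/-- A term over `n` Boolean variables, given as a partial assignment:
`C i = some b` means the literal `x i = b` appears in the term. -/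
abbrev Term (n : ℕ) := Fin n → Option Bool

/-- Satisfaction of a term by an assignment. -/
def TermSat {n : ℕ} (C : Term n) (x : Fin n → Bool) : Prop :=
  ∀ i b, C i = some b → x i = b

/-- Width of a term: the number of variables it mentions. -/
def termWidth {n : ℕ} (C : Term n) : ℕ :=
  (Finset.univ.filter fun i => C i ≠ none).card

/-- The index function of a decision list with terms `C`:
the first index whose term is satisfied by `x` (and `m` conventionally if none,
since `sInf ∅ = 0`; the default rule hypothesis makes the set nonempty). -/
def DLind {n m : ℕ} (C : Fin m → Term n) (x : Fin n → Bool) : ℕ :=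
  sInf {i : ℕ | ∃ h : i < m, TermSat (C ⟨i, h⟩) x}

/-- Evaluation of a decision list with terms `C` and values `v`. -/
def DLeval {n m : ℕ} {V : Type} [Inhabited V] (C : Fin m → Term n)
    (v : Fin m → V) (x : Fin n → Bool) : V :=
  if h : DLind C x < m then v ⟨DLind C x, h⟩ else default

/-- Probability of an event under the uniform distribution on `{0,1}^n`. -/
def pr (n : ℕ) (P : (Fin n → Bool) → Prop) : ℝ :=
  ((Finset.univ.filter P).card : ℝ) / 2 ^ n

/-- Hit probability of index `i` in the decision list with terms `C`. -/
def pL {n m : ℕ} (C : Fin m → Term n) (i : ℕ) : ℝ :=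
  pr n fun x => DLind C x = i

/-- The index function of the sub-decision-list `L|_J`. -/
def DLindSub {n m : ℕ} (C : Fin m → Term n) (J : Finset (Fin m)) (x : Fin n → Bool) : ℕ :=
  sInf {i : ℕ | ∃ h : i < m, (⟨i, h⟩ : Fin m) ∈ J ∧ TermSat (C ⟨i, h⟩) x}

/-- Evaluation of the sub-decision-list `L|_J`. -/
def DLevalSub {n m : ℕ} {V : Type} [Inhabited V] (C : Fin m → Term n) (v : Fin m → V)
    (J : Finset (Fin m)) (x : Fin n → Bool) : V :=
  if h : DLindSub C J x < m then v ⟨DLindSub C J x, h⟩ else default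

/-- A restriction: `some b` fixes a coordinate to `b`, `none` is a star. -/
abbrev Restriction (n : ℕ) := Fin n → Option Bool

/-- `x` is a completion of the restriction `ρ`. -/
def Compatible {n : ℕ} (ρ : Restriction n) (x : Fin n → Bool) : Prop :=
  ∀ i b, ρ i = some b → x i = b

/-- Number of stars of a restriction. -/
def stars {n : ℕ} (ρ : Restriction n) : ℕ :=
  (Finset.univ.filter fun i => ρ i = none).card

/-- Weight of a restriction under the product distribution `U(n, α)`:
each coordinate independently `*` with probability `α`, and `0` or `1`
each with probability `(1-α)/2`. -/
def restW {n : ℕ} (α : ℝ) (ρ : Restriction n) : ℝ :=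
  ∏ i : Fin n, if ρ i = none then α else (1 - α) / 2

/-- Index `i` is useful in the restricted decision list `L↾ρ`: some completion
of `ρ` hits rule `i`. -/
def Useful {n m : ℕ} (C : Fin m → Term n) (ρ : Restriction n) (i : Fin m) : Prop :=
  ∃ x, Compatible ρ x ∧ DLind C x = i.val

/-- Number of useful indices of `L↾ρ`. -/
def useNum {n m : ℕ} (C : Fin m → Term n) (ρ : Restriction n) : ℕ :=
  (Finset.univ.filter fun i : Fin m => Useful C ρ i).card

/-- `q_L(α, i)`: probability over `ρ ~ U(n, α)` that index `i` is useful in `L↾ρ`. -/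
def qL {n m : ℕ} (C : Fin m → Term n) (α : ℝ) (i : Fin m) : ℝ :=
  ∑ ρ : Restriction n, restW α ρ * (if Useful C ρ i then 1 else 0)

/-- Transition weight of the `β`-noise on a single bit. -/
def noiseW (β : ℝ) (a b : Bool) : ℝ := if a = b then (1 + β) / 2 else (1 - β) / 2

/-- Joint density of `(x, y)` where `x` is uniform and `y ~ N_β(x)`. -/
def pairW {n : ℕ} (β : ℝ) (x y : Fin n → Bool) : ℝ :=
  (1 / 2) ^ n * ∏ i : Fin n, noiseW β (x i) (y i)

/-- `Stab_L(β, i) = Pr[Ind L(x) = Ind L(y) = i]` for `x` uniform, `y ~ N_β(x)`. -/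
def StabInd {n m : ℕ} (C : Fin m → Term n) (β : ℝ) (i : Fin m) : ℝ :=
  ∑ x : Fin n → Bool, ∑ y : Fin n → Bool,
    pairW β x y * (if DLind C x = i.val ∧ DLind C y = i.val then 1 else 0)

/-- `Stab_β(g) = Pr[g(x) = g(y) = 1]` for `x` uniform, `y ~ N_β(x)`. -/
def stab {n : ℕ} (β : ℝ) (g : (Fin n → Bool) → Bool) : ℝ :=
  ∑ x : Fin n → Bool, ∑ y : Fin n → Bool,
    pairW β x y * (if g x = true ∧ g y = true then 1 else 0)

/-- Probability weight that a uniform completion of `ρ` equals `x`. -/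
def compW {n : ℕ} (ρ : Restriction n) (x : Fin n → Bool) : ℝ :=
  if Compatible ρ x then (1 / 2) ^ stars ρ else 0

/-- Evaluation of a DNF with terms `T`. -/
def DNFeval {n M : ℕ} (T : Fin M → Term n) (x : Fin n → Bool) : Prop :=
  ∃ t, TermSat (T t) x
namespace DLC

/-- Indicator of a proposition. -/
noncomputable def I (p : Prop) : ℝ := if p then 1 else 0

lemma I_nonneg (p : Prop) : 0 ≤ I p := by
  unfold I; split <;> norm_num

lemma I_le_one (p : Prop) : I p ≤ 1 := by
  unfold I; split <;> norm_num

lemma I_mono {p q : Prop} (h : p → q) : I p ≤ I q := by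
  unfold I; split
  · rename_i hp; rw [if_pos (h hp)]
  · exact I_nonneg q

lemma I_congr {p q : Prop} (h : p ↔ q) : I p = I q := by
  unfold I; by_cases hp : p
  · rw [if_pos hp, if_pos (h.mp hp)]
  · rw [if_neg hp, if_neg (fun hq => hp (h.mpr hq))]

lemma I_true {p : Prop} (h : p) : I p = 1 := if_pos h
lemma I_false {p : Prop} (h : ¬ p) : I p = 0 := if_neg h

lemma I_and_split {p q : Prop} : I (p ∧ q) = I p * I q := by
  unfold I; by_cases hp : p <;> by_cases hq : q <;> simp [hp, hq]

lemma I_diff {p q : Prop} (h : q → p) : I (p ∧ ¬ q) = I p - I q := by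
  unfold I; by_cases hq : q
  · rw [if_pos (h hq), if_pos hq, if_neg (fun h' => h'.2 hq)]; ring
  · rw [if_neg hq, sub_zero]
    by_cases hp : p
    · rw [if_pos hp, if_pos ⟨hp, hq⟩]
    · rw [if_neg hp, if_neg (fun h' => hp h'.1)]

/-- Per-coordinate weight of a restriction. -/
noncomputable def wt (α : ℝ) (o : Option Bool) : ℝ := if o = none then α else (1 - α) / 2

lemma wt_nonneg {α : ℝ} (h0 : 0 ≤ α) (h1 : α ≤ 1) (o : Option Bool) : 0 ≤ wt α o := by
  unfold wt; split
  · exact h0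
  · linarith

lemma restW_eq_prod_wt {n : ℕ} (α : ℝ) (ρ : Restriction n) :
    restW α ρ = ∏ i : Fin n, wt α (ρ i) := rfl

lemma restW_nonneg {n : ℕ} {α : ℝ} (h0 : 0 ≤ α) (h1 : α ≤ 1) (ρ : Restriction n) :
    0 ≤ restW α ρ :=
  Finset.prod_nonneg fun i _ => wt_nonneg h0 h1 (ρ i)

/-- Summation over a function cube decomposes along `Fin.cons`. -/
lemma sum_pi_succ {τ : Type} [Fintype τ] {n : ℕ} (g : (Fin (n + 1) → τ) → ℝ) :
    ∑ ρ : Fin (n + 1) → τ, g ρ = ∑ o : τ, ∑ ρ' : Fin n → τ, g (Fin.cons o ρ') := by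
  rw [← Equiv.sum_comp (Fin.consEquiv (fun _ : Fin (n+1) => τ)) g, Fintype.sum_prod_type]
  rfl

lemma restW_cons {n : ℕ} (α : ℝ) (o : Option Bool) (ρ' : Restriction n) :
    restW α (Fin.cons o ρ') = wt α o * restW α ρ' := by
  rw [restW_eq_prod_wt, Fin.prod_univ_succ]
  simp [restW_eq_prod_wt, wt]

lemma sum_wt {α : ℝ} : ∑ o : Option Bool, wt α o = 1 := by
  rw [Fintype.sum_option]
  simp [wt]
  ring

/-- Total mass of the restriction measure is 1. -/
lemma sum_restW {α : ℝ} : ∀ (n : ℕ), ∑ ρ : Restriction n, restW α ρ = 1 := by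
  intro n
  induction n with
  | zero =>
      rw [Fintype.sum_unique]
      simp [restW]
  | succ n ih =>
      rw [sum_pi_succ (fun ρ => restW α ρ)]
      have : ∀ o : Option Bool, ∑ ρ' : Restriction n, restW α (Fin.cons o ρ')
          = wt α o := by
        intro o
        simp_rw [restW_cons, ← Finset.mul_sum, ih, mul_one]
      simp_rw [this, sum_wt]

end DLC
namespace DLC

/-- The key scalar inequality: `((a+b)/2)^γ ≤ (1-γ) u^γ + (γ/2) a^γ + (γ/2) b^γ`
for `0 ≤ a, b ≤ u` and `γ ∈ (0,1]`. -/
lemma scalar_ineq {γ a b u : ℝ} (hγ0 : 0 < γ) (hγ1 : γ ≤ 1)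
    (ha : 0 ≤ a) (hb : 0 ≤ b) (hau : a ≤ u) (hbu : b ≤ u) :
    ((a + b) / 2) ^ γ ≤ (1 - γ) * u ^ γ + γ / 2 * a ^ γ + γ / 2 * b ^ γ := by
  rcases le_or_gt u 0 with hu | hu
  · -- then a = b = 0
    have ha0 : a = 0 := le_antisymm (hau.trans hu) ha
    have hb0 : b = 0 := le_antisymm (hbu.trans hu) hb
    have hu0 : u = 0 := le_antisymm hu (ha0 ▸ ha.trans hau)
    rw [ha0, hb0, hu0]
    rw [show ((0:ℝ) + 0)/2 = 0 by norm_num, Real.zero_rpow (ne_of_gt hγ0)]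
    norm_num
  · -- u > 0
    set s := (a + b) / 2 with hs
    have hs0 : 0 ≤ s := by positivity
    have hsu : s ≤ u := by rw [hs]; linarith
    have hu1γ : (0:ℝ) < u ^ (1 - γ) := Real.rpow_pos_of_pos hu _
    -- multiply through by u^(1-γ)
    rw [← mul_le_mul_iff_of_pos_right hu1γ]
    have key1 : ∀ c : ℝ, 0 ≤ c → c ≤ u → c ≤ c ^ γ * u ^ (1 - γ) := by
      intro c hc hcu
      rcases eq_or_lt_of_le hc with hc0 | hc0
      · rw [← hc0]; positivity
      · calc c = c ^ γ * c ^ (1 - γ) := by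
                rw [← Real.rpow_add hc0]; norm_num
          _ ≤ c ^ γ * u ^ (1 - γ) := by
                apply mul_le_mul_of_nonneg_left _ (Real.rpow_nonneg hc _)
                exact Real.rpow_le_rpow hc hcu (by linarith)
    have amgm : u ^ (1 - γ) * s ^ γ ≤ (1 - γ) * u + γ * s := by
      have := Real.geom_mean_le_arith_mean2_weighted
        (by linarith : (0:ℝ) ≤ 1 - γ) hγ0.le hu.le hs0 (by ring)
      linarith [this]
    have huγ : u ^ γ * u ^ (1 - γ) = u := by
      rw [← Real.rpow_add hu]; norm_num
    calc s ^ γ * u ^ (1 - γ) = u ^ (1 - γ) * s ^ γ := by ring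
      _ ≤ (1 - γ) * u + γ * s := amgm
      _ = (1 - γ) * u + γ / 2 * a + γ / 2 * b := by rw [hs]; ring
      _ ≤ (1 - γ) * (u ^ γ * u ^ (1 - γ)) + γ / 2 * (a ^ γ * u ^ (1 - γ))
            + γ / 2 * (b ^ γ * u ^ (1 - γ)) := by
          have h1 := key1 a ha hau
          have h2 := key1 b hb hbu
          have hγ2 : (0:ℝ) ≤ γ / 2 := by linarith
          have h1γ : (0:ℝ) ≤ 1 - γ := by linarith
          rw [huγ]
          nlinarith [mul_le_mul_of_nonneg_left h1 hγ2, mul_le_mul_of_nonneg_left h2 hγ2]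
      _ = ((1 - γ) * u ^ γ + γ / 2 * a ^ γ + γ / 2 * b ^ γ) * u ^ (1 - γ) := by ring

/-- Uniform measure of an event on the `n`-cube, as a sum. -/
noncomputable def mu (n : ℕ) (F : (Fin n → Bool) → Prop) : ℝ :=
  ∑ x : Fin n → Bool, ((2:ℝ)⁻¹) ^ n * I (F x)

lemma mu_nonneg (n : ℕ) (F : (Fin n → Bool) → Prop) : 0 ≤ mu n F :=
  Finset.sum_nonneg fun x _ => mul_nonneg (by positivity) (I_nonneg _)

lemma mu_mono {n : ℕ} {F G : (Fin n → Bool) → Prop} (h : ∀ x, F x → G x) :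
    mu n F ≤ mu n G :=
  Finset.sum_le_sum fun x _ => mul_le_mul_of_nonneg_left (I_mono (h x)) (by positivity)

lemma mu_succ {n : ℕ} (F : (Fin (n + 1) → Bool) → Prop) :
    mu (n + 1) F = (mu n (fun x' => F (Fin.cons false x'))
      + mu n (fun x' => F (Fin.cons true x'))) / 2 := by
  unfold mu
  rw [sum_pi_succ (fun x => ((2:ℝ)⁻¹) ^ (n+1) * I (F x)), Fintype.sum_bool]
  rw [eq_div_iff (by norm_num : (2:ℝ) ≠ 0)]
  rw [add_mul, Finset.sum_mul, Finset.sum_mul]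
  rw [add_comm]
  congr 1 <;> · apply Finset.sum_congr rfl; intro x' _; ring

/-- Probability that an event has a compatible completion, under restriction measure. -/
noncomputable def NE (α : ℝ) (n : ℕ) (F : (Fin n → Bool) → Prop) : ℝ :=
  ∑ ρ : Restriction n, restW α ρ * I (∃ x, Compatible ρ x ∧ F x)

lemma compatible_cons {n : ℕ} (o : Option Bool) (ρ' : Restriction n)
    (b : Bool) (x' : Fin n → Bool) :
    Compatible (Fin.cons o ρ') (Fin.cons b x') ↔
      ((∀ c, o = some c → b = c) ∧ Compatible ρ' x') := by
  constructor
  · intro h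
    refine ⟨fun c hc => ?_, fun i c hc => ?_⟩
    · have := h 0 c (by simpa using hc)
      simpa using this
    · have := h i.succ c (by simpa using hc)
      simpa using this
  · intro ⟨h0, h'⟩ i
    refine Fin.cases ?_ ?_ i
    · intro c hc
      simp only [Fin.cons_zero] at hc ⊢
      exact h0 c hc
    · intro j c hc
      simp only [Fin.cons_succ] at hc ⊢
      exact h' j c hc

end DLC
namespace DLC

lemma exists_comp_cons_none {n : ℕ} (ρ' : Restriction n) (F : (Fin (n + 1) → Bool) → Prop) :
    (∃ x, Compatible (Fin.cons none ρ') x ∧ F x) ↔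
      (∃ x', Compatible ρ' x' ∧ (F (Fin.cons false x') ∨ F (Fin.cons true x'))) := by
  constructor
  · rintro ⟨x, hc, hF⟩
    have hx : Fin.cons (x 0) (Fin.tail x) = x := Fin.cons_self_tail x
    rw [← hx] at hc hF
    rw [compatible_cons] at hc
    refine ⟨Fin.tail x, hc.2, ?_⟩
    cases hx0 : x 0 with
    | false => left; rw [hx0] at hF; exact hF
    | true => right; rw [hx0] at hF; exact hF
  · rintro ⟨x', hc, hF | hF⟩
    · exact ⟨Fin.cons false x', (compatible_cons _ _ _ _).mpr
        ⟨(fun c hc' => nomatch hc'), hc⟩, hF⟩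
    · exact ⟨Fin.cons true x', (compatible_cons _ _ _ _).mpr
        ⟨(fun c hc' => nomatch hc'), hc⟩, hF⟩

lemma exists_comp_cons_some {n : ℕ} (ρ' : Restriction n) (c : Bool)
    (F : (Fin (n + 1) → Bool) → Prop) :
    (∃ x, Compatible (Fin.cons (some c) ρ') x ∧ F x) ↔
      (∃ x', Compatible ρ' x' ∧ F (Fin.cons c x')) := by
  constructor
  · rintro ⟨x, hc', hF⟩
    have hx : Fin.cons (x 0) (Fin.tail x) = x := Fin.cons_self_tail x
    rw [← hx] at hc' hF
    rw [compatible_cons] at hc'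
    have hx0 : x 0 = c := hc'.1 c rfl
    rw [hx0] at hF
    exact ⟨Fin.tail x, hc'.2, hF⟩
  · rintro ⟨x', hc', hF⟩
    exact ⟨Fin.cons c x', (compatible_cons _ _ _ _).mpr
      ⟨(fun c' hc'' => Option.some.inj hc''), hc'⟩, hF⟩

/-- Lemma (G): the probability that a restriction leaves an event reachable is at
least `μ(F)^γ`, where `γ` is the fixing rate. -/
lemma G_lemma {γ : ℝ} (hγ0 : 0 < γ) (hγ1 : γ ≤ 1) :
    ∀ (n : ℕ) (F : (Fin n → Bool) → Prop), mu n F ^ γ ≤ NE (1 - γ) n F := by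
  intro n
  induction n with
  | zero =>
      intro F
      have hxall : ∀ x : Fin 0 → Bool, x = default := fun x => Subsingleton.elim x default
      have hmu : mu 0 F = I (F default) := by
        unfold mu
        rw [Fintype.sum_unique, pow_zero, one_mul]
        exact congrArg (fun x => I (F x)) (Subsingleton.elim _ _)
      have hne : NE (1 - γ) 0 F = I (F default) := by
        unfold NE
        rw [Fintype.sum_unique]
        have h1 : ∀ ρ : Restriction 0, restW (1 - γ) ρ = 1 := fun ρ =>
          Finset.prod_of_isEmpty _
        rw [h1, one_mul]
        refine I_congr ⟨?_, ?_⟩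
        · rintro ⟨x, _, hF⟩; rwa [hxall x] at hF
        · intro hF; exact ⟨default, fun i b _ => i.elim0, hF⟩
      rw [hmu, hne]
      unfold I
      split
      · rw [Real.one_rpow]
      · rw [Real.zero_rpow (ne_of_gt hγ0)]
  | succ n ih =>
      intro F
      set F0 : (Fin n → Bool) → Prop := fun x' => F (Fin.cons false x') with hF0
      set F1 : (Fin n → Bool) → Prop := fun x' => F (Fin.cons true x') with hF1
      have hNE : NE (1 - γ) (n + 1) F
          = (1 - γ) * NE (1 - γ) n (fun x' => F0 x' ∨ F1 x')
            + γ / 2 * NE (1 - γ) n F1 + γ / 2 * NE (1 - γ) n F0 := by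
        unfold NE
        rw [sum_pi_succ (fun ρ => restW (1 - γ) ρ * I (∃ x, Compatible ρ x ∧ F x))]
        rw [Fintype.sum_option, Fintype.sum_bool]
        have hwn : wt (1 - γ) none = 1 - γ := by simp [wt]
        have hws : ∀ c : Bool, wt (1 - γ) (some c) = γ / 2 := by
          intro c; unfold wt; rw [if_neg (by simp)]; ring
        have hnone : ∀ ρ' : Restriction n,
            restW (1 - γ) (Fin.cons none ρ') * I (∃ x, Compatible (Fin.cons none ρ') x ∧ F x)
            = (1 - γ) * (restW (1 - γ) ρ' * I (∃ x', Compatible ρ' x' ∧ (F0 x' ∨ F1 x'))) := by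
          intro ρ'
          rw [restW_cons, hwn, I_congr (exists_comp_cons_none ρ' F), mul_assoc]
        have hsome : ∀ (c : Bool) (ρ' : Restriction n),
            restW (1 - γ) (Fin.cons (some c) ρ') *
              I (∃ x, Compatible (Fin.cons (some c) ρ') x ∧ F x)
            = γ / 2 * (restW (1 - γ) ρ' *
                I (∃ x', Compatible ρ' x' ∧ F (Fin.cons c x'))) := by
          intro c ρ'
          rw [restW_cons, hws, I_congr (exists_comp_cons_some ρ' c F), mul_assoc]
        simp_rw [hnone, hsome]
        rw [← Finset.mul_sum, ← Finset.mul_sum, ← Finset.mul_sum]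
        ring
      have hmu := mu_succ F
      have hu0 : mu n F0 ≤ mu n (fun x' => F0 x' ∨ F1 x') := mu_mono (fun x h => Or.inl h)
      have hu1 : mu n F1 ≤ mu n (fun x' => F0 x' ∨ F1 x') := mu_mono (fun x h => Or.inr h)
      have hscal := scalar_ineq hγ0 hγ1 (mu_nonneg n F0) (mu_nonneg n F1) hu0 hu1
      rw [hmu, hNE]
      refine le_trans hscal ?_
      have t1 : (1 - γ) * (mu n (fun x' => F0 x' ∨ F1 x')) ^ γ
          ≤ (1 - γ) * NE (1 - γ) n (fun x' => F0 x' ∨ F1 x') :=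
        mul_le_mul_of_nonneg_left (ih _) (by linarith)
      have t2 : γ / 2 * (mu n F0) ^ γ ≤ γ / 2 * NE (1 - γ) n F0 :=
        mul_le_mul_of_nonneg_left (ih _) (by linarith)
      have t3 : γ / 2 * (mu n F1) ^ γ ≤ γ / 2 * NE (1 - γ) n F1 :=
        mul_le_mul_of_nonneg_left (ih _) (by linarith)
      linarith

end DLC
namespace DLC

lemma sum_I_mul {ι : Type} [Fintype ι] (p : ι → Prop) [DecidablePred p] (g : ι → ℝ) :
    ∑ x : ι, I (p x) * g x = ∑ x ∈ Finset.univ.filter p, g x := by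
  rw [Finset.sum_filter]
  apply Finset.sum_congr rfl
  intro x _
  unfold I
  split <;> simp

lemma restW_factor {n : ℕ} (α : ℝ) (ρ : Restriction n) (v : Fin n) :
    restW α ρ = wt α (ρ v) * ∏ u ∈ Finset.univ.erase v, wt α (ρ u) := by
  rw [restW_eq_prod_wt]
  exact (Finset.mul_prod_erase Finset.univ _ (Finset.mem_univ v)).symm

lemma restW_update {n : ℕ} (α : ℝ) (ρ : Restriction n) (v : Fin n) (c : Option Bool) :
    restW α (Function.update ρ v c)
      = wt α c * ∏ u ∈ Finset.univ.erase v, wt α (ρ u) := by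
  rw [restW_factor α (Function.update ρ v c) v, Function.update_self]
  congr 1
  apply Finset.prod_congr rfl
  intro u hu
  rw [Function.update_of_ne (Finset.ne_of_mem_erase hu)]

/-- The swap lemma: exchanging the value class of one coordinate. -/
lemma swap_lemma {n : ℕ} (α : ℝ) (v : Fin n) (a b : Option Bool)
    (h : Restriction n → ℝ) (hinv : ∀ ρ c, h (Function.update ρ v c) = h ρ) :
    wt α b * ∑ ρ ∈ Finset.univ.filter (fun ρ : Restriction n => ρ v = a), restW α ρ * h ρ
      = wt α a * ∑ ρ ∈ Finset.univ.filter (fun ρ : Restriction n => ρ v = b),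
          restW α ρ * h ρ := by
  rw [Finset.mul_sum, Finset.mul_sum]
  apply Finset.sum_nbij' (i := fun ρ => Function.update ρ v b)
    (j := fun ρ => Function.update ρ v a)
  · intro ρ hρ
    simp only [Finset.mem_filter, Finset.mem_univ, true_and] at *
    exact Function.update_self v b ρ
  · intro ρ hρ
    simp only [Finset.mem_filter, Finset.mem_univ, true_and] at *
    exact Function.update_self v a ρ
  · intro ρ hρ
    simp only [Finset.mem_filter, Finset.mem_univ, true_and] at hρ
    rw [Function.update_idem, ← hρ, Function.update_eq_self]
  · intro ρ hρ
    simp only [Finset.mem_filter, Finset.mem_univ, true_and] at hρ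
    rw [Function.update_idem, ← hρ, Function.update_eq_self]
  · intro ρ hρ
    simp only [Finset.mem_filter, Finset.mem_univ, true_and] at hρ
    rw [restW_update, hinv, restW_factor α ρ v, hρ]
    ring

end DLC
namespace DLC

section LooseInduction

variable {n m : ℕ}

/-- The main exchange induction: relaxing the constraint on the coordinates of a
term costs at most a factor `((2-γ)/γ)` per coordinate. -/
lemma loose_induction (C : Fin m → Term n) {γ : ℝ} (hγ0 : 0 < γ) (hγ1 : γ ≤ 1) (i : Fin m) :
    ∀ s : Finset (Fin n), (∀ v ∈ s, C i v ≠ none) →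
      ∀ h : Restriction n → ℝ, (∀ ρ, 0 ≤ h ρ) →
        (∀ (ρ : Restriction n) (v : Fin n), v ∈ s → ∀ c, h (Function.update ρ v c) = h ρ) →
        ∑ ρ : Restriction n, restW (1 - γ) ρ * (I (∀ v ∈ s, ρ v = none ∨ ρ v = C i v) * h ρ)
          ≤ ((2 - γ) / γ) ^ s.card *
            ∑ ρ : Restriction n, restW (1 - γ) ρ * (I (∀ v ∈ s, ρ v = C i v) * h ρ) := by
  intro s
  induction s using Finset.induction_on with
  | empty =>
      intro _ h _ _
      have h1 : ∀ ρ : Restriction n, I (∀ v ∈ (∅ : Finset (Fin n)), ρ v = none ∨ ρ v = C i v)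
          = 1 := fun ρ => I_true (fun v hv => absurd hv (Finset.notMem_empty v))
      have h2 : ∀ ρ : Restriction n, I (∀ v ∈ (∅ : Finset (Fin n)), ρ v = C i v) = 1 :=
        fun ρ => I_true (fun v hv => absurd hv (Finset.notMem_empty v))
      simp_rw [h1, h2, Finset.card_empty, pow_zero, one_mul]
      exact le_refl _
  | @insert v s hv ih =>
      intro hsub h hh0 hinv
      have hvC : C i v ≠ none := hsub v (Finset.mem_insert_self v s)
      have hα0 : (0:ℝ) ≤ 1 - γ := by linarith
      have hα1 : (1:ℝ) - γ ≤ 1 := by linarith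
      set R := (2 - γ) / γ with hR
      have hR1 : 1 ≤ R := by
        rw [hR, le_div_iff₀ hγ0]; linarith
      have hR0 : 0 ≤ R := le_trans zero_le_one hR1
      have hupd : ∀ (ρ : Restriction n) (c : Option Bool) (u : Fin n), u ∈ s →
          Function.update ρ v c u = ρ u := fun ρ c u hu =>
        Function.update_of_ne (fun he => hv (by rw [← he]; exact hu)) _ _
      set g : Restriction n → ℝ := fun ρ => I (∀ u ∈ s, ρ u = none ∨ ρ u = C i u) * h ρ
        with hg
      have hg0 : ∀ ρ, 0 ≤ g ρ := fun ρ => mul_nonneg (I_nonneg _) (hh0 ρ)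
      have ginv : ∀ (ρ : Restriction n) (c : Option Bool),
          g (Function.update ρ v c) = g ρ := by
        intro ρ c
        rw [hg]
        dsimp only
        congr 1
        · refine I_congr ⟨fun H u hu => ?_, fun H u hu => ?_⟩
          · rw [← hupd ρ c u hu]; exact H u hu
          · rw [hupd ρ c u hu]; exact H u hu
        · exact hinv ρ v (Finset.mem_insert_self v s) c
      -- split the loose indicator at v
      have hiff : ∀ ρ : Restriction n,
          (∀ u ∈ insert v s, ρ u = none ∨ ρ u = C i u)
            ↔ ((ρ v = none ∨ ρ v = C i v) ∧ ∀ u ∈ s, ρ u = none ∨ ρ u = C i u) :=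
        fun ρ => Finset.forall_mem_insert v s _
      have hsplit : ∀ ρ : Restriction n,
          I (∀ u ∈ insert v s, ρ u = none ∨ ρ u = C i u) * h ρ
            = I (ρ v = none) * g ρ + I (ρ v = C i v) * g ρ := by
        intro ρ
        rw [I_congr (hiff ρ), hg]
        dsimp only
        by_cases hA : ρ v = none
        · have hB : ¬ ρ v = C i v := fun hB => hvC (by rw [← hB, hA])
          by_cases hQ : ∀ u ∈ s, ρ u = none ∨ ρ u = C i u
          · rw [I_true (⟨Or.inl hA, hQ⟩ : _ ∧ _), I_true hA, I_true hQ, I_false hB]; ring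
          · rw [I_false (fun h' => hQ (And.right h')), I_false hQ]; ring
        · by_cases hB : ρ v = C i v
          · by_cases hQ : ∀ u ∈ s, ρ u = none ∨ ρ u = C i u
            · rw [I_true (⟨Or.inr hB, hQ⟩ : _ ∧ _), I_false hA, I_true hB, I_true hQ]; ring
            · rw [I_false (fun h' => hQ (And.right h')), I_false hQ]; ring
          · rw [I_false (fun h' => (And.left h').elim hA hB), I_false hA, I_false hB]; ring
      -- the two slices
      have hsum : ∑ ρ : Restriction n, restW (1 - γ) ρ *
            (I (∀ u ∈ insert v s, ρ u = none ∨ ρ u = C i u) * h ρ)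
          = (∑ ρ ∈ Finset.univ.filter (fun ρ : Restriction n => ρ v = none),
              restW (1 - γ) ρ * g ρ)
            + ∑ ρ ∈ Finset.univ.filter (fun ρ : Restriction n => ρ v = C i v),
                restW (1 - γ) ρ * g ρ := by
        rw [← sum_I_mul (fun ρ : Restriction n => ρ v = none)
            (fun ρ => restW (1 - γ) ρ * g ρ),
          ← sum_I_mul (fun ρ : Restriction n => ρ v = C i v)
            (fun ρ => restW (1 - γ) ρ * g ρ), ← Finset.sum_add_distrib]
        apply Finset.sum_congr rfl
        intro ρ _
        rw [hsplit ρ]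
        ring
      -- swap relation between the two slices
      have hwnone : wt (1 - γ) none = 1 - γ := by simp [wt]
      have hwsome : wt (1 - γ) (C i v) = γ / 2 := by
        unfold wt
        rw [if_neg hvC]; ring
      have hswap := swap_lemma (1 - γ) v none (C i v) g (fun ρ c => ginv ρ c)
      rw [hwnone, hwsome] at hswap
      set An := ∑ ρ ∈ Finset.univ.filter (fun ρ : Restriction n => ρ v = none),
        restW (1 - γ) ρ * g ρ with hAn
      set Ac := ∑ ρ ∈ Finset.univ.filter (fun ρ : Restriction n => ρ v = C i v),
        restW (1 - γ) ρ * g ρ with hAc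
      -- hswap : γ/2 * An = (1-γ) * Ac
      have hAnAc : An + Ac = R * Ac := by
        rw [hR]
        field_simp
        linarith [hswap]
      -- rewrite Ac as a full sum suitable for the induction hypothesis
      set h2 : Restriction n → ℝ := fun ρ => I (ρ v = C i v) * h ρ with hh2
      have hAc2 : Ac = ∑ ρ : Restriction n, restW (1 - γ) ρ *
          (I (∀ u ∈ s, ρ u = none ∨ ρ u = C i u) * h2 ρ) := by
        rw [hAc, ← sum_I_mul (fun ρ : Restriction n => ρ v = C i v)
          (fun ρ => restW (1 - γ) ρ * g ρ)]
        apply Finset.sum_congr rfl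
        intro ρ _
        rw [hg, hh2]
        dsimp only
        ring
      have hh20 : ∀ ρ, 0 ≤ h2 ρ := fun ρ => mul_nonneg (I_nonneg _) (hh0 ρ)
      have hinv2 : ∀ (ρ : Restriction n) (u : Fin n), u ∈ s → ∀ c,
          h2 (Function.update ρ u c) = h2 ρ := by
        intro ρ u hu c
        rw [hh2]
        dsimp only
        have hne : v ≠ u := fun he => hv (by rw [he]; exact hu)
        rw [Function.update_of_ne hne c ρ, hinv ρ u (Finset.mem_insert_of_mem hu) c]
      have hsub' : ∀ u ∈ s, C i u ≠ none := fun u hu =>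
        hsub u (Finset.mem_insert_of_mem hu)
      have hfinal := ih hsub' h2 hh20 hinv2
      rw [← hAc2] at hfinal
      have hmerge : ∀ ρ : Restriction n,
          I (∀ u ∈ s, ρ u = C i u) * h2 ρ = I (∀ u ∈ insert v s, ρ u = C i u) * h ρ := by
        intro ρ
        rw [I_congr (Finset.forall_mem_insert v s _), I_and_split, hh2]
        dsimp only
        ring
      calc ∑ ρ : Restriction n, restW (1 - γ) ρ *
            (I (∀ u ∈ insert v s, ρ u = none ∨ ρ u = C i u) * h ρ)
          = An + Ac := hsum
        _ = R * Ac := hAnAc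
        _ ≤ R * (R ^ s.card * ∑ ρ : Restriction n, restW (1 - γ) ρ *
              (I (∀ u ∈ s, ρ u = C i u) * h2 ρ)) := by
            apply mul_le_mul_of_nonneg_left hfinal hR0
        _ = R ^ (insert v s).card * ∑ ρ : Restriction n, restW (1 - γ) ρ *
              (I (∀ u ∈ insert v s, ρ u = C i u) * h ρ) := by
            rw [Finset.card_insert_of_notMem hv, pow_succ]
            simp_rw [hmerge]
            ring

end LooseInduction

end DLC
namespace DLC

section Star

variable {n m : ℕ}

/-- The nested "still avoidable" events. -/
def SatK (C : Fin m → Term n) (k : ℕ) (ρ : Restriction n) : Prop :=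
  ∃ x, Compatible ρ x ∧ ∀ j : Fin m, j.val < k → ¬ TermSat (C j) x

noncomputable def PrS (C : Fin m → Term n) (γ : ℝ) (k : ℕ) : ℝ :=
  ∑ ρ : Restriction n, restW (1 - γ) ρ * I (SatK C k ρ)

lemma SatK_mono (C : Fin m → Term n) (k : ℕ) (ρ : Restriction n)
    (h : SatK C (k + 1) ρ) : SatK C k ρ := by
  obtain ⟨x, hc, hav⟩ := h
  exact ⟨x, hc, fun j hj => hav j (Nat.lt_succ_of_lt hj)⟩

/-- The "reachability" part of usefulness, not referring to the coordinates of `C i`. -/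
def GoodP (C : Fin m → Term n) (i : Fin m) (ρ : Restriction n) : Prop :=
  ∃ x, TermSat (C i) x ∧ (∀ j : Fin m, j.val < i.val → ¬ TermSat (C j) x) ∧
    (∀ v b, C i v = none → ρ v = some b → x v = b)

lemma GoodP_invariant (C : Fin m → Term n) (i : Fin m) (ρ : Restriction n) (v : Fin n)
    (hCv : C i v ≠ none) (c : Option Bool) :
    GoodP C i (Function.update ρ v c) ↔ GoodP C i ρ := by
  constructor
  · rintro ⟨x, h1, h2, h3⟩
    refine ⟨x, h1, h2, fun u b hCu hρu => ?_⟩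
    have huv : u ≠ v := fun he => hCv (he ▸ hCu)
    exact h3 u b hCu (by rw [Function.update_of_ne huv c ρ]; exact hρu)
  · rintro ⟨x, h1, h2, h3⟩
    refine ⟨x, h1, h2, fun u b hCu hρu => ?_⟩
    have huv : u ≠ v := fun he => hCv (he ▸ hCu)
    rw [Function.update_of_ne huv c ρ] at hρu
    exact h3 u b hCu hρu

lemma Useful_sub (C : Fin m → Term n) (i : Fin m)
    (hne : ∀ x : Fin n → Bool,
      {k : ℕ | ∃ h : k < m, TermSat (C ⟨k, h⟩) x}.Nonempty)
    (ρ : Restriction n) (hu : Useful C ρ i) :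
    (∀ v ∈ Finset.univ.filter (fun v : Fin n => C i v ≠ none),
        ρ v = none ∨ ρ v = C i v) ∧ GoodP C i ρ := by
  obtain ⟨x, hcomp, hind⟩ := hu
  have hmem : DLind C x ∈ {k : ℕ | ∃ h : k < m, TermSat (C ⟨k, h⟩) x} :=
    Nat.sInf_mem (hne x)
  rw [hind] at hmem
  obtain ⟨hlt, hsat⟩ := hmem
  have hTS : TermSat (C i) x := by
    have he : (⟨i.val, hlt⟩ : Fin m) = i := Fin.ext rfl
    rwa [he] at hsat
  have hAvoid : ∀ j : Fin m, j.val < i.val → ¬ TermSat (C j) x := by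
    intro j hj hTSj
    have hmemj : j.val ∈ {k : ℕ | ∃ h : k < m, TermSat (C ⟨k, h⟩) x} := by
      refine ⟨j.isLt, ?_⟩
      have he : (⟨j.val, j.isLt⟩ : Fin m) = j := Fin.ext rfl
      rwa [he]
    have hle : DLind C x ≤ j.val := Nat.sInf_le hmemj
    rw [hind] at hle
    omega
  constructor
  · intro v hvmem
    have hCv : C i v ≠ none := (Finset.mem_filter.mp hvmem).2
    cases hρv : ρ v with
    | none => exact Or.inl rfl
    | some b =>
        right
        obtain ⟨c, hc⟩ := Option.ne_none_iff_exists'.mp hCv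
        have hxv : x v = c := hTS v c hc
        have hxb : x v = b := hcomp v b hρv
        rw [hc, ← hxv, hxb]
  · exact ⟨x, hTS, hAvoid, fun v b _ hρv => hcomp v b hρv⟩

lemma Strict_Good_sub (C : Fin m → Term n) (i : Fin m) (ρ : Restriction n)
    (hstrict : ∀ v ∈ Finset.univ.filter (fun v : Fin n => C i v ≠ none), ρ v = C i v)
    (hgood : GoodP C i ρ) :
    SatK C i.val ρ ∧ ¬ SatK C (i.val + 1) ρ := by
  obtain ⟨x, hTS, hAvoid, hoff⟩ := hgood
  constructor
  · refine ⟨x, ?_, hAvoid⟩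
    intro v b hρv
    by_cases hCv : C i v = none
    · exact hoff v b hCv hρv
    · have hvmem : v ∈ Finset.univ.filter (fun v : Fin n => C i v ≠ none) :=
        Finset.mem_filter.mpr ⟨Finset.mem_univ v, hCv⟩
      have : C i v = some b := by rw [← hstrict v hvmem]; exact hρv
      exact hTS v b this
  · rintro ⟨y, hcy, havoid⟩
    apply havoid i (Nat.lt_succ_self i.val)
    intro v c hCv
    have hvmem : v ∈ Finset.univ.filter (fun v : Fin n => C i v ≠ none) :=
      Finset.mem_filter.mpr ⟨Finset.mem_univ v, by rw [hCv]; exact Option.some_ne_none c⟩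
    apply hcy
    rw [hstrict v hvmem, hCv]

end Star

end DLC
namespace DLC

section StarMain

variable {n m : ℕ}

lemma qL_eq_I (C : Fin m → Term n) (α : ℝ) (i : Fin m) :
    qL C α i = ∑ ρ : Restriction n, restW α ρ * I (Useful C ρ i) := rfl

lemma per_rule (C : Fin m → Term n) {γ : ℝ} (hγ0 : 0 < γ) (hγ1 : γ ≤ 1)
    (w : ℕ) (i : Fin m) (hwid : termWidth (C i) ≤ w)
    (hne : ∀ x : Fin n → Bool,
      {k : ℕ | ∃ h : k < m, TermSat (C ⟨k, h⟩) x}.Nonempty) :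
    qL C (1 - γ) i ≤ ((2 - γ) / γ) ^ w * (PrS C γ i.val - PrS C γ (i.val + 1)) := by
  have hα0 : (0:ℝ) ≤ 1 - γ := by linarith
  have hα1 : (1:ℝ) - γ ≤ 1 := by linarith
  set R := (2 - γ) / γ with hR
  have hR1 : 1 ≤ R := by rw [hR, le_div_iff₀ hγ0]; linarith
  have hR0 : 0 ≤ R := le_trans zero_le_one hR1
  set Vi := Finset.univ.filter (fun v : Fin n => C i v ≠ none) with hVi
  -- step A
  have stepA : qL C (1 - γ) i ≤ ∑ ρ : Restriction n, restW (1 - γ) ρ *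
      (I (∀ v ∈ Vi, ρ v = none ∨ ρ v = C i v) * I (GoodP C i ρ)) := by
    rw [qL_eq_I]
    apply Finset.sum_le_sum
    intro ρ _
    apply mul_le_mul_of_nonneg_left _ (restW_nonneg hα0 hα1 ρ)
    rw [← I_and_split]
    exact I_mono (fun hu => Useful_sub C i hne ρ hu)
  -- step B
  have hsub : ∀ v ∈ Vi, C i v ≠ none := fun v hv => (Finset.mem_filter.mp hv).2
  have hinv : ∀ (ρ : Restriction n) (v : Fin n), v ∈ Vi → ∀ c,
      I (GoodP C i (Function.update ρ v c)) = I (GoodP C i ρ) := by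
    intro ρ v hv c
    exact I_congr (GoodP_invariant C i ρ v (hsub v hv) c)
  have stepB := loose_induction C hγ0 hγ1 i Vi hsub (fun ρ => I (GoodP C i ρ))
    (fun ρ => I_nonneg _) hinv
  have hcard : Vi.card = termWidth (C i) := rfl
  -- step C
  have stepC : ∑ ρ : Restriction n, restW (1 - γ) ρ *
      (I (∀ v ∈ Vi, ρ v = C i v) * I (GoodP C i ρ))
        ≤ PrS C γ i.val - PrS C γ (i.val + 1) := by
    unfold PrS
    rw [← Finset.sum_sub_distrib]
    apply Finset.sum_le_sum
    intro ρ _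
    rw [← mul_sub]
    apply mul_le_mul_of_nonneg_left _ (restW_nonneg hα0 hα1 ρ)
    rw [← I_and_split, ← I_diff (SatK_mono C i.val ρ)]
    exact I_mono (fun hp => Strict_Good_sub C i ρ hp.1 hp.2)
  -- combine
  have hsums : ∑ ρ : Restriction n, restW (1 - γ) ρ *
      (I (∀ v ∈ Vi, ρ v = C i v) * I (GoodP C i ρ)) ≥ 0 :=
    Finset.sum_nonneg fun ρ _ => mul_nonneg (restW_nonneg hα0 hα1 ρ)
      (mul_nonneg (I_nonneg _) (I_nonneg _))
  have hpow : R ^ Vi.card ≤ R ^ w := pow_le_pow_right₀ hR1 (hcard ▸ hwid)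
  calc qL C (1 - γ) i
      ≤ ∑ ρ : Restriction n, restW (1 - γ) ρ *
          (I (∀ v ∈ Vi, ρ v = none ∨ ρ v = C i v) * I (GoodP C i ρ)) := stepA
    _ ≤ R ^ Vi.card * ∑ ρ : Restriction n, restW (1 - γ) ρ *
          (I (∀ v ∈ Vi, ρ v = C i v) * I (GoodP C i ρ)) := stepB
    _ ≤ R ^ w * ∑ ρ : Restriction n, restW (1 - γ) ρ *
          (I (∀ v ∈ Vi, ρ v = C i v) * I (GoodP C i ρ)) :=
        mul_le_mul_of_nonneg_right hpow hsums
    _ ≤ R ^ w * (PrS C γ i.val - PrS C γ (i.val + 1)) :=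
        mul_le_mul_of_nonneg_left stepC (by positivity)

/-- Lemma (A): the expected number of useful rules is at most `((2-γ)/γ)^w`. -/
lemma sum_qL_le (C : Fin m → Term n) {γ : ℝ} (hγ0 : 0 < γ) (hγ1 : γ ≤ 1)
    (w : ℕ) (hwid : ∀ j, termWidth (C j) ≤ w)
    (hne : ∀ x : Fin n → Bool,
      {k : ℕ | ∃ h : k < m, TermSat (C ⟨k, h⟩) x}.Nonempty) :
    ∑ i : Fin m, qL C (1 - γ) i ≤ ((2 - γ) / γ) ^ w := by
  have hα0 : (0:ℝ) ≤ 1 - γ := by linarith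
  have hα1 : (1:ℝ) - γ ≤ 1 := by linarith
  set R := (2 - γ) / γ with hR
  have hR1 : 1 ≤ R := by rw [hR, le_div_iff₀ hγ0]; linarith
  have htel : ∑ i : Fin m, (PrS C γ i.val - PrS C γ (i.val + 1))
      = PrS C γ 0 - PrS C γ m := by
    rw [Fin.sum_univ_eq_sum_range (fun k => PrS C γ k - PrS C γ (k + 1)) m]
    exact Finset.sum_range_sub' (fun k => PrS C γ k) m
  have hPrS0 : PrS C γ 0 ≤ 1 := by
    unfold PrS
    calc ∑ ρ : Restriction n, restW (1 - γ) ρ * I (SatK C 0 ρ)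
        ≤ ∑ ρ : Restriction n, restW (1 - γ) ρ * 1 :=
          Finset.sum_le_sum fun ρ _ =>
            mul_le_mul_of_nonneg_left (I_le_one _) (restW_nonneg hα0 hα1 ρ)
      _ = 1 := by simp_rw [mul_one]; exact sum_restW n
  have hPrSm : 0 ≤ PrS C γ m :=
    Finset.sum_nonneg fun ρ _ => mul_nonneg (restW_nonneg hα0 hα1 ρ) (I_nonneg _)
  calc ∑ i : Fin m, qL C (1 - γ) i
      ≤ ∑ i : Fin m, R ^ w * (PrS C γ i.val - PrS C γ (i.val + 1)) :=
        Finset.sum_le_sum fun i _ => per_rule C hγ0 hγ1 w i (hwid i) hne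
    _ = R ^ w * (PrS C γ 0 - PrS C γ m) := by rw [← Finset.mul_sum, htel]
    _ ≤ R ^ w * 1 := by
        apply mul_le_mul_of_nonneg_left _ (by positivity)
        linarith
    _ = R ^ w := mul_one _

lemma pr_eq_mu (n : ℕ) (P : (Fin n → Bool) → Prop) : pr n P = mu n P := by
  unfold pr mu I
  rw [← Finset.mul_sum, Finset.sum_boole, inv_pow, div_eq_mul_inv, mul_comm]

/-- The master inequality (★): the `γ`-moments of the hit probabilities
of a width-`w` decision list sum to at most `((2-γ)/γ)^w`. -/
lemma star_ineq (C : Fin m → Term n) {γ : ℝ} (hγ0 : 0 < γ) (hγ1 : γ ≤ 1)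
    (w : ℕ) (hwid : ∀ j, termWidth (C j) ≤ w)
    (hne : ∀ x : Fin n → Bool,
      {k : ℕ | ∃ h : k < m, TermSat (C ⟨k, h⟩) x}.Nonempty) :
    ∑ i : Fin m, pL C i.val ^ γ ≤ ((2 - γ) / γ) ^ w := by
  refine le_trans (Finset.sum_le_sum fun i _ => ?_) (sum_qL_le C hγ0 hγ1 w hwid hne)
  show pL C i.val ^ γ ≤ qL C (1 - γ) i
  have h1 : pL C i.val = mu n (fun x => DLind C x = i.val) := pr_eq_mu n _
  have h2 : NE (1 - γ) n (fun x => DLind C x = i.val) = qL C (1 - γ) i := rfl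
  rw [h1, ← h2]
  exact G_lemma hγ0 hγ1 n _

lemma pr_err_le (C : Fin m → Term n) (J : Finset (Fin m)) (P : (Fin n → Bool) → Prop)
    (h : ∀ x, P x → ∃ hlt : DLind C x < m, (⟨DLind C x, hlt⟩ : Fin m) ∈ Jᶜ) :
    pr n P ≤ ∑ i ∈ Jᶜ, pL C i.val := by
  rw [pr_eq_mu]
  have key : ∀ x : Fin n → Bool, I (P x) ≤ ∑ i ∈ Jᶜ, I (DLind C x = i.val) := by
    intro x
    by_cases hP : P x
    · obtain ⟨hlt, hmemc⟩ := h x hP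
      have h1 : I (DLind C x = (⟨DLind C x, hlt⟩ : Fin m).val) = 1 := I_true rfl
      calc I (P x) ≤ 1 := I_le_one _
        _ = I (DLind C x = (⟨DLind C x, hlt⟩ : Fin m).val) := h1.symm
        _ ≤ ∑ i ∈ Jᶜ, I (DLind C x = i.val) :=
            Finset.single_le_sum (f := fun i : Fin m => I (DLind C x = i.val))
              (fun i _ => I_nonneg _) hmemc
    · rw [I_false hP]
      exact Finset.sum_nonneg fun i _ => I_nonneg _
  calc mu n P = ∑ x : Fin n → Bool, ((2:ℝ)⁻¹)^n * I (P x) := rfl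
    _ ≤ ∑ x : Fin n → Bool, ((2:ℝ)⁻¹)^n * ∑ i ∈ Jᶜ, I (DLind C x = i.val) :=
        Finset.sum_le_sum fun x _ => mul_le_mul_of_nonneg_left (key x) (by positivity)
    _ = ∑ i ∈ Jᶜ, ∑ x : Fin n → Bool, ((2:ℝ)⁻¹)^n * I (DLind C x = i.val) := by
        simp_rw [Finset.mul_sum]
        rw [Finset.sum_comm]
    _ = ∑ i ∈ Jᶜ, pL C i.val := by
        apply Finset.sum_congr rfl
        intro i _
        exact (pr_eq_mu n _).symm

end StarMain

end DLC
set_option maxHeartbeats 2000000 in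
theorem decision_list_compression :
    ∃ K : ℝ, 0 < K ∧
      ∀ (n m w : ℕ) (V : Type) (_ : Inhabited V)
        (C : Fin m → Term n) (v : Fin m → V) (ε : ℝ),
        1 ≤ w → 0 < ε → ε ≤ 1 →
        (∀ j, termWidth (C j) ≤ w) →
        ∀ (hm : 0 < m), C ⟨m - 1, Nat.sub_lt hm one_pos⟩ = (fun _ => none) →
        ∃ J : Finset (Fin m),
          (⟨m - 1, Nat.sub_lt hm one_pos⟩ : Fin m) ∈ J ∧
          (J.card : ℝ) ≤ (2 + Real.logb 2 (1 / ε) / w) ^ (K * w) ∧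
          (∀ i ∈ J, i ≠ (⟨m - 1, Nat.sub_lt hm one_pos⟩ : Fin m) →
            ∀ i' ∉ J, pL C (i' : Fin m).val ≤ pL C i.val) ∧
          pr n (fun x => DLeval C v x ≠ DLevalSub C v J x) ≤ ε := by
  classical
  refine ⟨8, by norm_num, ?_⟩
  intro n m w V _ C v ε hw hε0 hε1 hwid hm hC
  set d : Fin m := ⟨m - 1, Nat.sub_lt hm one_pos⟩ with hd
  have hdTS : ∀ x : Fin n → Bool, TermSat (C d) x := by
    intro x i b h
    rw [hC] at h
    cases h
  have hne : ∀ x : Fin n → Bool,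
      {k : ℕ | ∃ h : k < m, TermSat (C ⟨k, h⟩) x}.Nonempty := fun x =>
    ⟨m - 1, Nat.sub_lt hm one_pos, hdTS x⟩
  have hmem : ∀ x : Fin n → Bool,
      ∃ h : DLind C x < m, TermSat (C ⟨DLind C x, h⟩) x := fun x => Nat.sInf_mem (hne x)
  have hpL0 : ∀ k : ℕ, 0 ≤ pL C k := by
    intro k
    unfold pL pr
    positivity
  -- parameters
  set t := Real.logb 2 (1 / ε) with ht
  have ht0 : 0 ≤ t := Real.logb_nonneg one_lt_two (by rw [le_div_iff₀ hε0]; linarith)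
  have hw1 : (1:ℝ) ≤ (w:ℝ) := by exact_mod_cast hw
  have hwpos : (0:ℝ) < (w:ℝ) := by linarith
  have hwt0 : (0:ℝ) < (w:ℝ) + t := by linarith
  set γ := (w:ℝ) / (2 * ((w:ℝ) + t)) with hγ
  have hγ0 : 0 < γ := by
    rw [hγ]
    positivity
  have hγhalf : γ ≤ 1/2 := by
    rw [hγ, div_le_iff₀ (by linarith)]
    linarith
  have hγ1 : γ ≤ 1 := by linarith
  have h1γpos : 0 < 1 - γ := by linarith
  have h1γhalf : 1/2 ≤ 1 - γ := by linarith
  -- the master inequality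
  have hstar := DLC.star_ineq C hγ0 hγ1 w hwid hne
  set B := 2 / γ with hB
  have hB4 : (4:ℝ) ≤ B := by
    rw [hB, le_div_iff₀ hγ0]
    linarith
  have hB1 : (1:ℝ) ≤ B := by linarith
  have hB0 : (0:ℝ) ≤ B := by linarith
  have hRB : (2 - γ)/γ ≤ B := by
    rw [hB, div_le_div_iff₀ hγ0 hγ0]
    nlinarith
  have hstarB : ∑ i : Fin m, pL C i.val ^ γ ≤ B ^ w :=
    le_trans hstar (pow_le_pow_left₀ (by apply div_nonneg <;> linarith) hRB w)
  -- the threshold δ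
  set X := ε * (γ/2)^w with hX
  have hX0 : 0 < X := by rw [hX]; positivity
  have hX1 : X ≤ 1 := by
    rw [hX]
    have h2 : (γ/2)^w ≤ 1 := pow_le_one₀ (by positivity) (by linarith)
    nlinarith [pow_nonneg (le_of_lt (by positivity : (0:ℝ) < γ/2)) w]
  set δ := X ^ ((1-γ)⁻¹) with hδ
  have hδ0 : 0 < δ := Real.rpow_pos_of_pos hX0 _
  have hδpow : δ ^ (1-γ) = X := by
    rw [hδ, ← Real.rpow_mul hX0.le, inv_mul_cancel₀ (ne_of_gt h1γpos), Real.rpow_one]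
  -- the sub-list
  set J : Finset (Fin m) := insert d (Finset.univ.filter (fun i : Fin m => δ ≤ pL C i.val))
    with hJ
  have hdJ : d ∈ J := Finset.mem_insert_self d _
  refine ⟨J, hdJ, ?_, ?_, ?_⟩
  · -- cardinality bound
    set G := 2 + t / (w:ℝ) with hG
    have hG2 : (2:ℝ) ≤ G := by
      rw [hG]
      have : 0 ≤ t / (w:ℝ) := by positivity
      linarith
    have hG1 : (1:ℝ) ≤ G := by linarith
    have hG0 : (0:ℝ) ≤ G := by linarith
    set N := (Finset.univ.filter (fun i : Fin m => δ ≤ pL C i.val)).card with hN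
    have hcard1 : (J.card : ℝ) ≤ (N:ℝ) + 1 := by
      have := Finset.card_insert_le d (Finset.univ.filter (fun i : Fin m => δ ≤ pL C i.val))
      rw [hJ]
      exact_mod_cast this
    have hδγpos : 0 < δ ^ γ := Real.rpow_pos_of_pos hδ0 _
    have hNδ : (N:ℝ) * δ ^ γ ≤ B ^ w := by
      calc (N:ℝ) * δ ^ γ
          = ∑ _i ∈ Finset.univ.filter (fun i : Fin m => δ ≤ pL C i.val), δ ^ γ := by
            rw [Finset.sum_const, nsmul_eq_mul, hN]
        _ ≤ ∑ i ∈ Finset.univ.filter (fun i : Fin m => δ ≤ pL C i.val), pL C i.val ^ γ :=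
            Finset.sum_le_sum fun i hi =>
              Real.rpow_le_rpow hδ0.le (Finset.mem_filter.mp hi).2 hγ0.le
        _ ≤ ∑ i : Fin m, pL C i.val ^ γ :=
            Finset.sum_le_sum_of_subset_of_nonneg (Finset.filter_subset _ _)
              (fun i _ _ => Real.rpow_nonneg (hpL0 _) _)
        _ ≤ B ^ w := hstarB
    have hNle : (N:ℝ) ≤ B ^ w * (δ ^ γ)⁻¹ := by
      rw [← le_div_iff₀ hδγpos] at hNδ
      rw [div_eq_mul_inv] at hNδ
      exact hNδ
    -- bound (δ^γ)⁻¹ ≤ 2^w * B^w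
    have hexp1 : (1-γ)⁻¹ * γ ≤ 2 * γ := by
      have h2 : (1-γ)⁻¹ ≤ 2 := by
        rw [inv_le_comm₀ h1γpos (by norm_num)]
        linarith
      nlinarith
    have hd2 : X ^ (2*γ) ≤ δ ^ γ := by
      rw [hδ, ← Real.rpow_mul hX0.le]
      exact Real.rpow_le_rpow_of_exponent_ge hX0 hX1 hexp1
    have hd3 : (δ ^ γ)⁻¹ ≤ (X ^ (2*γ))⁻¹ := by
      apply inv_anti₀ (Real.rpow_pos_of_pos hX0 _) hd2
    have hXsplit : (X ^ (2*γ))⁻¹ = (ε ^ (2*γ))⁻¹ * (((γ/2)^w) ^ (2*γ))⁻¹ := by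
      rw [hX, Real.mul_rpow hε0.le (by positivity), mul_inv]
    have hεbound : (ε ^ (2*γ))⁻¹ ≤ (2:ℝ) ^ w := by
      have he1 : (ε ^ (2*γ))⁻¹ = (ε⁻¹) ^ (2*γ) := by
        rw [← Real.inv_rpow hε0.le]
      have he2 : ε⁻¹ = (2:ℝ) ^ t := by
        rw [ht, ← one_div ε]
        exact (Real.rpow_logb two_pos (by norm_num) (by positivity)).symm
      have he3 : ((2:ℝ) ^ t) ^ (2*γ) = (2:ℝ) ^ (t * (2*γ)) :=
        (Real.rpow_mul (le_of_lt two_pos) t (2*γ)).symm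
      have he4 : t * (2*γ) ≤ (w:ℝ) := by
        have heq : t * (2 * γ) = (t * (w:ℝ)) / ((w:ℝ) + t) := by
          rw [hγ]
          field_simp
        rw [heq, div_le_iff₀ hwt0]
        nlinarith
      have he5 : (2:ℝ) ^ (t * (2*γ)) ≤ (2:ℝ) ^ ((w:ℕ):ℝ) :=
        Real.rpow_le_rpow_of_exponent_le one_le_two (by exact_mod_cast he4)
      rw [he1, he2, he3]
      calc (2:ℝ) ^ (t * (2*γ)) ≤ (2:ℝ) ^ ((w:ℕ):ℝ) := he5
        _ = (2:ℝ) ^ w := Real.rpow_natCast 2 w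
    have hγbound : (((γ/2)^w) ^ (2*γ))⁻¹ ≤ B ^ w := by
      have hg1 : (((γ/2)^w) ^ (2*γ))⁻¹ = (((γ/2)^w)⁻¹) ^ (2*γ) := by
        rw [← Real.inv_rpow (by positivity)]
      have hg2 : ((γ/2)^w)⁻¹ = B ^ w := by
        rw [← inv_pow, hB]
        congr 1
        rw [inv_div]
      have hg3 : (1:ℝ) ≤ B ^ w := one_le_pow₀ hB1
      have hg4 : ((B^w : ℝ)) ^ (2*γ) ≤ ((B^w : ℝ)) ^ (1:ℝ) :=
        Real.rpow_le_rpow_of_exponent_le hg3 (by linarith)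
      rw [hg1, hg2]
      calc ((B^w : ℝ)) ^ (2*γ) ≤ ((B^w : ℝ)) ^ (1:ℝ) := hg4
        _ = B ^ w := Real.rpow_one _
    -- put the cardinality bound together
    have hinv0 : (0:ℝ) ≤ (ε ^ (2*γ))⁻¹ := by positivity
    have hNfinal : (N:ℝ) ≤ 2 ^ w * (B ^ w * B ^ w) := by
      calc (N:ℝ) ≤ B ^ w * (δ ^ γ)⁻¹ := hNle
        _ ≤ B ^ w * ((ε ^ (2*γ))⁻¹ * (((γ/2)^w) ^ (2*γ))⁻¹) := by
            apply mul_le_mul_of_nonneg_left _ (by positivity)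
            rw [← hXsplit]
            exact hd3
        _ ≤ B ^ w * ((2:ℝ) ^ w * B ^ w) := by
            apply mul_le_mul_of_nonneg_left _ (by positivity)
            apply mul_le_mul hεbound hγbound (by positivity) (by positivity)
        _ = 2 ^ w * (B ^ w * B ^ w) := by ring
    -- compare with the target
    have hBG : B ≤ 4 * G := by
      have hBeq : B = 4 + 4 * (t / (w:ℝ)) := by
        rw [hB, hγ]
        field_simp
        ring
      rw [hBeq, hG]
      have : 0 ≤ t / (w:ℝ) := by positivity
      linarith
    have h32 : (32:ℝ) ≤ G ^ 5 := by
      calc (32:ℝ) = 2 ^ 5 := by norm_num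
        _ ≤ G ^ 5 := pow_le_pow_left₀ (by norm_num) hG2 5
    have hfinal : 2 ^ w * (B ^ w * B ^ w) + 1 ≤ G ^ (8 * w) := by
      have hp : B ^ w ≤ (4*G) ^ w := pow_le_pow_left₀ hB0 hBG w
      have s1 : 2 ^ w * (B ^ w * B ^ w) ≤ 2 ^ w * ((4*G) ^ w * (4*G) ^ w) := by
        have hq : B ^ w * B ^ w ≤ (4*G) ^ w * (4*G) ^ w :=
          mul_le_mul hp hp (pow_nonneg hB0 w) (pow_nonneg (le_trans hB0 hBG) w)
        exact mul_le_mul_of_nonneg_left hq (by positivity)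
      have s2 : 2 ^ w * ((4*G) ^ w * (4*G) ^ w) = 32 ^ w * (G ^ w * G ^ w) := by
        have h32w : (32:ℝ) ^ w = 2 ^ w * (4 ^ w * 4 ^ w) := by
          rw [show (32:ℝ) = 2 * (4 * 4) by norm_num, mul_pow, mul_pow]
        rw [mul_pow, h32w]
        ring
      have s3 : (32:ℝ) ^ w ≤ (G ^ 5) ^ w := pow_le_pow_left₀ (by norm_num) h32 w
      have s4 : 32 ^ w * (G ^ w * G ^ w) ≤ (G^5) ^ w * (G ^ w * G ^ w) :=
        mul_le_mul_of_nonneg_right s3 (by positivity)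
      have s5 : (G^5) ^ w * (G ^ w * G ^ w) = G ^ (7 * w) := by
        rw [← pow_mul, ← pow_add, ← pow_add]
        ring_nf
      have s6 : (1:ℝ) ≤ G ^ (7 * w) := one_le_pow₀ hG1
      have s7 : G ^ (7*w) + G ^ (7*w) ≤ G ^ (8 * w) := by
        have : G ^ (7*w) * 2 ≤ G ^ (7*w) * G := by
          apply mul_le_mul_of_nonneg_left hG2 (by positivity)
        have h8 : G ^ (7*w) * G ≤ G ^ (8*w) := by
          rw [← pow_succ]
          apply pow_le_pow_right₀ hG1
          omega
        linarith
      calc 2 ^ w * (B ^ w * B ^ w) + 1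
          ≤ 32 ^ w * (G ^ w * G ^ w) + 1 := by rw [← s2]; linarith
        _ ≤ G ^ (7*w) + 1 := by rw [← s5]; linarith
        _ ≤ G ^ (7*w) + G ^ (7*w) := by linarith
        _ ≤ G ^ (8 * w) := s7
    have hrpow : (G : ℝ) ^ ((8:ℝ) * (w:ℝ)) = G ^ (8 * w) := by
      rw [show ((8:ℝ) * (w:ℝ)) = (((8 * w : ℕ)):ℝ) by push_cast; ring]
      exact Real.rpow_natCast G (8*w)
    show (J.card : ℝ) ≤ (2 + Real.logb 2 (1 / ε) / (w:ℝ)) ^ ((8:ℝ) * (w:ℝ))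
    rw [← ht, ← hG, hrpow]
    calc (J.card : ℝ) ≤ (N:ℝ) + 1 := hcard1
      _ ≤ 2 ^ w * (B ^ w * B ^ w) + 1 := by linarith
      _ ≤ G ^ (8 * w) := hfinal
  · -- ordering property
    intro i hiJ hid i' hi'J
    have hi : δ ≤ pL C i.val := by
      rcases Finset.mem_insert.mp hiJ with h | h
      · exact absurd h hid
      · exact (Finset.mem_filter.mp h).2
    have hi' : pL C i'.val < δ := by
      by_contra hcon
      push_neg at hcon
      exact hi'J (Finset.mem_insert_of_mem
        (Finset.mem_filter.mpr ⟨Finset.mem_univ i', hcon⟩))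
    exact le_trans hi'.le hi
  · -- the error bound
    have hevaleq : ∀ (x : Fin n → Bool) (hlt : DLind C x < m),
        (⟨DLind C x, hlt⟩ : Fin m) ∈ J → DLeval C v x = DLevalSub C v J x := by
      intro x hlt hmemJ
      obtain ⟨hlt', hsat⟩ := hmem x
      have hsubmem : DLind C x ∈
          {i : ℕ | ∃ h : i < m, (⟨i, h⟩ : Fin m) ∈ J ∧ TermSat (C ⟨i, h⟩) x} :=
        ⟨hlt, hmemJ, hsat⟩
      have h1 : DLindSub C J x ≤ DLind C x := Nat.sInf_le hsubmem
      have h2 : DLindSub C J x ∈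
          {i : ℕ | ∃ h : i < m, (⟨i, h⟩ : Fin m) ∈ J ∧ TermSat (C ⟨i, h⟩) x} :=
        Nat.sInf_mem ⟨DLind C x, hsubmem⟩
      obtain ⟨hlt2, _, hsat2⟩ := h2
      have h3 : DLind C x ≤ DLindSub C J x := Nat.sInf_le ⟨hlt2, hsat2⟩
      have heq : DLindSub C J x = DLind C x := le_antisymm h1 h3
      unfold DLeval DLevalSub
      rw [heq]
    have herr : pr n (fun x => DLeval C v x ≠ DLevalSub C v J x)
        ≤ ∑ i ∈ Jᶜ, pL C i.val := by
      apply DLC.pr_err_le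
      intro x hP
      obtain ⟨hlt, _⟩ := hmem x
      exact ⟨hlt, Finset.mem_compl.mpr (fun hJ' => hP (hevaleq x hlt hJ'))⟩
    have htail : ∑ i ∈ Jᶜ, pL C i.val ≤ ε := by
      have hstep : ∀ i ∈ Jᶜ, pL C i.val ≤ pL C i.val ^ γ * δ ^ (1-γ) := by
        intro i hi
        have hiJ : i ∉ J := Finset.mem_compl.mp hi
        have hilt : pL C i.val < δ := by
          by_contra hcon
          push_neg at hcon
          exact hiJ (Finset.mem_insert_of_mem
            (Finset.mem_filter.mpr ⟨Finset.mem_univ i, hcon⟩))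
        rcases eq_or_lt_of_le (hpL0 i.val) with h0 | h0
        · rw [← h0, Real.zero_rpow (ne_of_gt hγ0), zero_mul]
        · calc pL C i.val = pL C i.val ^ γ * pL C i.val ^ (1-γ) := by
                rw [← Real.rpow_add h0]
                norm_num
            _ ≤ pL C i.val ^ γ * δ ^ (1-γ) := by
                apply mul_le_mul_of_nonneg_left _ (Real.rpow_nonneg (hpL0 _) _)
                exact Real.rpow_le_rpow (hpL0 _) hilt.le (by linarith)
      calc ∑ i ∈ Jᶜ, pL C i.val
          ≤ ∑ i ∈ Jᶜ, pL C i.val ^ γ * δ ^ (1-γ) := Finset.sum_le_sum hstep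
        _ = (∑ i ∈ Jᶜ, pL C i.val ^ γ) * δ ^ (1-γ) := by rw [Finset.sum_mul]
        _ ≤ (∑ i : Fin m, pL C i.val ^ γ) * δ ^ (1-γ) := by
            apply mul_le_mul_of_nonneg_right _ (Real.rpow_nonneg hδ0.le _)
            exact Finset.sum_le_sum_of_subset_of_nonneg (Finset.subset_univ _)
              (fun i _ _ => Real.rpow_nonneg (hpL0 _) _)
        _ ≤ B ^ w * δ ^ (1-γ) :=
            mul_le_mul_of_nonneg_right hstarB (Real.rpow_nonneg hδ0.le _)
        _ = B ^ w * X := by rw [hδpow]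
        _ = ε := by
            rw [hX, hB, ← mul_assoc, mul_comm ((2/γ)^w) ε, mul_assoc, ← mul_pow]
            rw [div_mul_div_comm]
            rw [show 2 * γ / (γ * 2) = 1 by rw [mul_comm]; exact div_self (by positivity)]
            rw [one_pow, mul_one]
    exact le_trans herr htail
end
end

section
/- For every w ≥ 1 there exists a function L : {0,1}^w → {0,1} (hence expressible as a width-w decision list) such that for every width-w decision list L' of size at most 2^w/(100w), Pr_{x uniform on {0,1}^w}[L(x) ≠ L'(x)] > 1/3. -/
open Finset
open scoped Classical BigOperators

noncomputable section

theorem approx_lower_bound (w : ℕ) (hw : 1 ≤ w) :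
    ∃ L : (Fin w → Bool) → Bool,
      ∀ (m : ℕ) (C : Fin m → Term w) (v : Fin m → Bool),
        (∀ j, termWidth (C j) ≤ w) →
        ∀ (hm : 0 < m), C ⟨m - 1, Nat.sub_lt hm one_pos⟩ = (fun _ => none) →
        (m : ℝ) ≤ 2 ^ w / (100 * w) →
        1 / 3 < pr w (fun x => L x ≠ DLeval C v x) := by
  classical
  set N : ℕ := 2 ^ w with hNdef
  set M : ℕ := N / (100 * w) with hMdef
  set t : ℕ := N / 3 with htdef
  have hN1 : 1 ≤ N := Nat.one_le_two_pow
  have hcardX : Fintype.card (Fin w → Bool) = N := by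
    rw [hNdef]; simp
  set d : ((Fin w → Bool) → Bool) → ((Fin w → Bool) → Bool) → ℕ :=
    fun f g => (Finset.univ.filter fun x => f x ≠ g x).card with hd
  set ball : ((Fin w → Bool) → Bool) → Finset ((Fin w → Bool) → Bool) :=
    fun f => Finset.univ.filter fun L => d L f ≤ t with hball
  set S : ℕ := ∑ k ∈ range (t + 1), N.choose k with hSdef
  set K : ℕ := (M + 1) * (2 * 3 ^ w) ^ M with hKdef
  -- ball cardinality bound
  have hballcard : ∀ f, (ball f).card ≤ S := by
    intro f
    have hT : ((range (t + 1)).biUnion fun k =>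
        Finset.powersetCard k (Finset.univ : Finset (Fin w → Bool))).card = S := by
      rw [Finset.card_biUnion]
      · refine Finset.sum_congr rfl fun k _ => ?_
        rw [Finset.card_powersetCard, Finset.card_univ, hcardX]
      · intro x _ y _ hxy
        rw [Function.onFun, Finset.disjoint_left]
        intro s hs hs'
        rw [Finset.mem_powersetCard] at hs hs'
        exact hxy (hs.2.symm.trans hs'.2)
    rw [← hT]
    apply Finset.card_le_card_of_injOn (fun L => Finset.univ.filter fun x => L x ≠ f x)
    · intro L hL
      simp only [Finset.mem_coe, Finset.mem_biUnion, Finset.mem_range, Finset.mem_powersetCard]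
      refine ⟨(Finset.univ.filter fun x => L x ≠ f x).card, ?_, Finset.subset_univ _, rfl⟩
      have hdl : d L f ≤ t := (Finset.mem_filter.mp hL).2
      exact Nat.lt_succ_of_le hdl
    · intro L1 _ L2 _ hEq
      simp only at hEq
      funext x
      have hx : (L1 x ≠ f x) ↔ (L2 x ≠ f x) := by
        constructor
        · intro h
          have hmem : x ∈ Finset.univ.filter fun y => L1 y ≠ f y := by
            simp [h]
          rw [hEq] at hmem
          simpa using hmem
        · intro h
          have hmem : x ∈ Finset.univ.filter fun y => L2 y ≠ f y := by
            simp [h]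
          rw [← hEq] at hmem
          simpa using hmem
      cases hL1 : L1 x <;> cases hL2 : L2 x <;> cases hf : f x <;> simp_all
  -- binomial sum bound
  have htN : t ≤ N := Nat.div_le_self _ _
  have hS : S * 2 ^ (N - t) ≤ 3 ^ N := by
    have h3 : (3 : ℕ) ^ N = ∑ k ∈ range (N + 1), 2 ^ (N - k) * N.choose k := by
      have := add_pow (1 : ℕ) 2 N
      simpa using this
    calc S * 2 ^ (N - t) = ∑ k ∈ range (t + 1), 2 ^ (N - t) * N.choose k := by
          rw [Finset.sum_mul]
          refine Finset.sum_congr rfl fun k _ => ?_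
          ring
      _ ≤ ∑ k ∈ range (t + 1), 2 ^ (N - k) * N.choose k := by
          refine Finset.sum_le_sum fun k hk => ?_
          have hk' : k ≤ t := by
            have := Finset.mem_range.mp hk; omega
          exact Nat.mul_le_mul_right _ (Nat.pow_le_pow_right (by norm_num) (by omega))
      _ ≤ ∑ k ∈ range (N + 1), 2 ^ (N - k) * N.choose k := by
          refine Finset.sum_le_sum_of_subset ?_
          exact Finset.range_subset_range.mpr (by omega)
      _ = 3 ^ N := h3.symm
  -- key arithmetic inequality
  have h243 : ∀ a : ℕ, (3 : ℕ) ^ (5 * a) ≤ 2 ^ (8 * a) := by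
    intro a
    calc (3 : ℕ) ^ (5 * a) = 243 ^ a := by rw [pow_mul]; norm_num
      _ ≤ 256 ^ a := Nat.pow_le_pow_left (by norm_num) a
      _ = 2 ^ (8 * a) := by rw [pow_mul]; norm_num
  have hA : K * 3 ^ N < 2 ^ (2 * N - t) := by
    have h100 : 100 * (w * M) ≤ N := by
      calc 100 * (w * M) = M * (100 * w) := by ring
        _ ≤ N := Nat.div_mul_le_self N (100 * w)
    have hMwM : M ≤ w * M := Nat.le_mul_of_pos_left M (by omega)
    have ht3 : 3 * t ≤ N := by omega
    have hexp : 10 * M + 8 * (w * M) + 8 * N ≤ 5 * (2 * N - t) := by omega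
    have hM2 : M + 1 ≤ 2 ^ M := Nat.lt_two_pow_self
    have hKb : K ≤ 2 ^ (2 * M) * 3 ^ (w * M) := by
      calc K = (M + 1) * (2 * 3 ^ w) ^ M := rfl
        _ ≤ 2 ^ M * (2 * 3 ^ w) ^ M := Nat.mul_le_mul_right _ hM2
        _ = 2 ^ (2 * M) * 3 ^ (w * M) := by
            rw [mul_pow, ← pow_mul, ← mul_assoc, ← pow_add]
            ring_nf
    have h5 : (K * 3 ^ N) ^ 5 < (2 ^ (2 * N - t)) ^ 5 := by
      calc (K * 3 ^ N) ^ 5 = K ^ 5 * 3 ^ (5 * N) := by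
            rw [mul_pow, ← pow_mul]; ring_nf
        _ ≤ (2 ^ (2 * M) * 3 ^ (w * M)) ^ 5 * 3 ^ (5 * N) :=
            Nat.mul_le_mul_right _ (Nat.pow_le_pow_left hKb 5)
        _ = 2 ^ (10 * M) * 3 ^ (5 * (w * M)) * 3 ^ (5 * N) := by
            rw [mul_pow, ← pow_mul, ← pow_mul]
            ring_nf
        _ ≤ 2 ^ (10 * M) * 2 ^ (8 * (w * M)) * 3 ^ (5 * N) :=
            Nat.mul_le_mul_right _ (Nat.mul_le_mul_left _ (h243 _))
        _ < 2 ^ (10 * M) * 2 ^ (8 * (w * M)) * 2 ^ (8 * N) := by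
            apply mul_lt_mul_of_pos_left _ (by positivity)
            calc (3 : ℕ) ^ (5 * N) = 243 ^ N := by rw [pow_mul]; norm_num
              _ < 256 ^ N := Nat.pow_lt_pow_left (by norm_num) (by omega)
              _ = 2 ^ (8 * N) := by rw [pow_mul]; norm_num
        _ = 2 ^ (10 * M + 8 * (w * M) + 8 * N) := by
            rw [← pow_add, ← pow_add]
        _ ≤ 2 ^ (5 * (2 * N - t)) := Nat.pow_le_pow_right (by norm_num) hexp
        _ = (2 ^ (2 * N - t)) ^ 5 := by rw [← pow_mul]; ring_nf
    exact lt_of_pow_lt_pow_left₀ 5 (Nat.zero_le _) h5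
  have hfinal : K * S < 2 ^ N := by
    have h1 : K * S * 2 ^ (N - t) ≤ K * 3 ^ N := by
      calc K * S * 2 ^ (N - t) = K * (S * 2 ^ (N - t)) := by ring
        _ ≤ K * 3 ^ N := Nat.mul_le_mul_left _ hS
    have h2 : K * S * 2 ^ (N - t) < 2 ^ N * 2 ^ (N - t) := by
      calc K * S * 2 ^ (N - t) ≤ K * 3 ^ N := h1
        _ < 2 ^ (2 * N - t) := hA
        _ = 2 ^ N * 2 ^ (N - t) := by rw [← pow_add]; congr 1; omega
    exact lt_of_mul_lt_mul_right h2 (Nat.zero_le _)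
  -- the bad set
  set Bad : Finset ((Fin w → Bool) → Bool) :=
    (range (M + 1)).biUnion fun m =>
      (Finset.univ : Finset ((Fin m → Term w) × (Fin m → Bool))).biUnion fun p =>
        ball (DLeval p.1 p.2) with hBad
  have hBadCard : Bad.card < 2 ^ N := by
    have h1 : Bad.card ≤ ∑ m ∈ range (M + 1),
        ((Finset.univ : Finset ((Fin m → Term w) × (Fin m → Bool))).biUnion fun p =>
          ball (DLeval p.1 p.2)).card := Finset.card_biUnion_le
    have h2 : ∀ m ∈ range (M + 1),
        ((Finset.univ : Finset ((Fin m → Term w) × (Fin m → Bool))).biUnion fun p =>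
          ball (DLeval p.1 p.2)).card ≤ (2 * 3 ^ w) ^ M * S := by
      intro m hm
      calc ((Finset.univ : Finset ((Fin m → Term w) × (Fin m → Bool))).biUnion fun p =>
            ball (DLeval p.1 p.2)).card
          ≤ ∑ p : (Fin m → Term w) × (Fin m → Bool), (ball (DLeval p.1 p.2)).card :=
            Finset.card_biUnion_le
        _ ≤ ∑ _p : (Fin m → Term w) × (Fin m → Bool), S :=
            Finset.sum_le_sum fun p _ => hballcard _
        _ = Fintype.card ((Fin m → Term w) × (Fin m → Bool)) * S := by
            rw [Finset.sum_const, Finset.card_univ, smul_eq_mul]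
        _ ≤ (2 * 3 ^ w) ^ M * S := by
            apply Nat.mul_le_mul_right
            have hc : Fintype.card ((Fin m → Term w) × (Fin m → Bool)) = (2 * 3 ^ w) ^ m := by
              rw [Fintype.card_prod, Fintype.card_fun, Fintype.card_fun, Fintype.card_fun]
              simp [mul_pow, ← pow_mul]
              ring
            rw [hc]
            exact Nat.pow_le_pow_right (by positivity)
              (Nat.lt_succ_iff.mp (Finset.mem_range.mp hm))
    calc Bad.card ≤ ∑ m ∈ range (M + 1),
          ((Finset.univ : Finset ((Fin m → Term w) × (Fin m → Bool))).biUnion fun p =>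
            ball (DLeval p.1 p.2)).card := h1
      _ ≤ ∑ _m ∈ range (M + 1), (2 * 3 ^ w) ^ M * S := Finset.sum_le_sum h2
      _ = (M + 1) * ((2 * 3 ^ w) ^ M * S) := by
          rw [Finset.sum_const, Finset.card_range, smul_eq_mul]
      _ = K * S := by rw [hKdef]; ring
      _ < 2 ^ N := hfinal
  obtain ⟨L, hL⟩ : ∃ L, L ∉ Bad := by
    by_contra hcon
    push_neg at hcon
    have hsub : (Finset.univ : Finset ((Fin w → Bool) → Bool)) ⊆ Bad := fun L _ => hcon L
    have := Finset.card_le_card hsub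
    rw [Finset.card_univ] at this
    have hcF : Fintype.card ((Fin w → Bool) → Bool) = 2 ^ N := by
      rw [Fintype.card_fun, hcardX]; simp
    omega
  refine ⟨L, ?_⟩
  intro m C v _ hm _ hmle
  have hmM : m ≤ M := by
    have h100w : (0 : ℝ) < 100 * w := by positivity
    have hr : (m : ℝ) * (100 * w) ≤ 2 ^ w := by
      rw [← le_div_iff₀ h100w]
      exact hmle
    have hnat : m * (100 * w) ≤ N := by
      rw [hNdef]
      exact_mod_cast hr
    exact (Nat.le_div_iff_mul_le (by omega)).mpr hnat
  have hnb : t < d L (DLeval C v) := by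
    by_contra hcon
    push_neg at hcon
    apply hL
    refine Finset.mem_biUnion.mpr ⟨m, Finset.mem_range.mpr (by omega), ?_⟩
    refine Finset.mem_biUnion.mpr ⟨(C, v), Finset.mem_univ _, ?_⟩
    rw [hball]
    simp only [Finset.mem_filter, Finset.mem_univ, true_and]
    exact hcon
  have hNlt : N < 3 * d L (DLeval C v) := by omega
  rw [pr, div_lt_div_iff₀ (by norm_num) (by positivity), one_mul]
  have hgoal : (2 : ℝ) ^ w = ((N : ℕ) : ℝ) := by rw [hNdef]; push_cast; ring
  rw [hgoal]
  have hfin : N < (Finset.univ.filter fun x => L x ≠ DLeval C v x).card * 3 := by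
    have hdd : d L (DLeval C v) = (Finset.univ.filter fun x => L x ≠ DLeval C v x).card := rfl
    omega
  norm_cast
end
end

section
/- For every w and n > 2w there exists a width-w decision list L : {0,1}^n → {0,1} that is not equal (as a function) to any width-w decision list of size smaller than C(n,w)/n^2, where C(n,w) is the binomial coefficient. -/
open Finset
open scoped Classical BigOperators

noncomputable section

/-! ### Auxiliary material for the lower bound -/

/-- The monotone term requiring all variables in `s` to be true. -/
def termOf {n : ℕ} (s : Finset (Fin n)) : Term n :=
  fun i => if i ∈ s then some true else none

lemma termSat_termOf {n : ℕ} (s : Finset (Fin n)) (x : Fin n → Bool) :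
    TermSat (termOf s) x ↔ ∀ i ∈ s, x i = true := by
  constructor
  · intro h i hi
    exact h i true (by simp [termOf, hi])
  · intro h i b hb
    by_cases hi : i ∈ s
    · simp only [termOf, if_pos hi, Option.some.injEq] at hb
      rw [← hb]; exact h i hi
    · simp [termOf, hi] at hb

lemma termWidth_termOf {n : ℕ} (s : Finset (Fin n)) :
    termWidth (termOf s) = s.card := by
  unfold termWidth
  congr 1
  ext i
  by_cases hi : i ∈ s <;> simp [termOf, hi]

/-- The big decision list: terms for each set `S j`, plus an all-`none` default term. -/
def bigC {n M : ℕ} (S : Fin M → Finset (Fin n)) : Fin (M + 1) → Term n :=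
  fun j => if h : (j : ℕ) < M then termOf (S ⟨j, h⟩) else fun _ => none

lemma dlind_bigC_hit {n M w : ℕ} (S : Fin M → Finset (Fin n))
    (hinj : Function.Injective S) (hcard : ∀ j, (S j).card = w) (j : Fin M) :
    DLind (bigC S) (fun i => if i ∈ S j then true else false) = j.val := by
  set x : Fin n → Bool := fun i => if i ∈ S j then true else false with hx
  have hjlt : (j : ℕ) < M + 1 := Nat.lt_succ_of_lt j.isLt
  have hmem : j.val ∈ {i : ℕ | ∃ h : i < M + 1, TermSat (bigC S ⟨i, h⟩) x} := by
    refine ⟨hjlt, ?_⟩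
    have hC : bigC S ⟨j.val, hjlt⟩ = termOf (S j) := by
      show (if h : (j : ℕ) < M then termOf (S ⟨j, h⟩) else fun _ => none) = termOf (S j)
      rw [dif_pos j.isLt]
    rw [hC, termSat_termOf]
    intro i hi
    simp [hx, hi]
  have hlb : ∀ k ∈ {i : ℕ | ∃ h : i < M + 1, TermSat (bigC S ⟨i, h⟩) x}, j.val ≤ k := by
    rintro k ⟨hk, hsat⟩
    by_cases hkM : k < M
    · have hC : bigC S ⟨k, hk⟩ = termOf (S ⟨k, hkM⟩) := by
        show (if h : k < M then termOf (S ⟨k, h⟩) else fun _ => none) = _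
        rw [dif_pos hkM]
      rw [hC, termSat_termOf] at hsat
      have hsub : S ⟨k, hkM⟩ ⊆ S j := by
        intro i hi
        have := hsat i hi
        by_contra hnot
        simp [hx, hnot] at this
      have heq : S ⟨k, hkM⟩ = S j :=
        Finset.eq_of_subset_of_card_le hsub (by rw [hcard, hcard])
      have := hinj heq
      have : k = j.val := congrArg Fin.val this
      omega
    · omega
  exact le_antisymm (Nat.sInf_le hmem) (hlb _ (Nat.sInf_mem ⟨j.val, hmem⟩))

lemma dlind_bigC_default {n M w : ℕ} (S : Fin M → Finset (Fin n))
    (hcard : ∀ j, (S j).card = w) (hw : 0 < w) :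
    DLind (bigC S) (fun _ => false) = M := by
  have hmem : M ∈ {i : ℕ | ∃ h : i < M + 1, TermSat (bigC S ⟨i, h⟩) (fun _ => false)} := by
    refine ⟨Nat.lt_succ_self M, ?_⟩
    have hC : bigC S ⟨M, Nat.lt_succ_self M⟩ = fun _ => none := by
      show (if h : M < M then termOf (S ⟨M, h⟩) else fun _ => none) = _
      rw [dif_neg (lt_irrefl M)]
    rw [hC]
    intro i b hb
    simp at hb
  have hlb : ∀ k ∈ {i : ℕ | ∃ h : i < M + 1, TermSat (bigC S ⟨i, h⟩) (fun _ => false)},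
      M ≤ k := by
    rintro k ⟨hk, hsat⟩
    by_contra hkM
    push_neg at hkM
    have hC : bigC S ⟨k, hk⟩ = termOf (S ⟨k, hkM⟩) := by
      show (if h : k < M then termOf (S ⟨k, h⟩) else fun _ => none) = _
      rw [dif_pos hkM]
    rw [hC, termSat_termOf] at hsat
    have hne : (S ⟨k, hkM⟩).Nonempty := Finset.card_pos.mp (by rw [hcard]; exact hw)
    obtain ⟨i, hi⟩ := hne
    simpa using hsat i hi
  exact le_antisymm (Nat.sInf_le hmem) (hlb _ (Nat.sInf_mem ⟨M, hmem⟩))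

lemma dleval_bigC_inj {n M w : ℕ} (S : Fin M → Finset (Fin n))
    (hinj : Function.Injective S) (hcard : ∀ j, (S j).card = w) (hw : 0 < w) :
    Function.Injective (fun v : Fin (M + 1) → Bool => DLeval (bigC S) v) := by
  intro v v' h
  funext j
  by_cases hj : (j : ℕ) < M
  · have h1 := congrFun h (fun i => if i ∈ S ⟨j, hj⟩ then true else false)
    have hd := dlind_bigC_hit S hinj hcard ⟨j.val, hj⟩
    simp only [DLeval, hd] at h1
    have hlt : (j : ℕ) < M + 1 := Nat.lt_succ_of_lt hj
    rw [dif_pos hlt, dif_pos hlt] at h1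
    have hjj : (⟨(j : ℕ), hlt⟩ : Fin (M + 1)) = j := Fin.ext rfl
    rwa [hjj] at h1
  · have hjM : (j : ℕ) = M := by omega
    have h1 := congrFun h (fun _ => false)
    have hd := dlind_bigC_default S hcard hw
    simp only [DLeval, hd] at h1
    have hlt : M < M + 1 := Nat.lt_succ_self M
    rw [dif_pos hlt, dif_pos hlt] at h1
    have hjj : (⟨M, hlt⟩ : Fin (M + 1)) = j := Fin.ext hjM.symm
    rwa [hjj] at h1

lemma geom_sum_lt_pow {r K : ℕ} (hr : 2 ≤ r) : ∑ k ∈ Finset.range K, r ^ k < r ^ K := by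
  induction K with
  | zero => simp
  | succ K ih =>
    rw [Finset.sum_range_succ, pow_succ]
    have : r ^ K * 2 ≤ r ^ K * r := Nat.mul_le_mul_left _ hr
    omega

lemma two_three_pow_le {n : ℕ} (h : 3 ≤ n) : 3 ^ n * 2 ≤ 4 ^ n := by
  induction n with
  | zero => omega
  | succ k ih =>
    rcases Nat.lt_or_ge k 3 with hk | hk
    · interval_cases k
      · omega
      · omega
      · norm_num
    · have := ih (by omega)
      have h1 : 3 ^ (k + 1) * 2 = 3 * (3 ^ k * 2) := by ring
      have h2 : 3 * (3 ^ k * 2) ≤ 3 * 4 ^ k := by omega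
      have h3 : 3 * 4 ^ k ≤ 4 ^ (k + 1) := by
        rw [pow_succ]; omega
      omega

theorem exact_lower_bound (w n : ℕ) (hn : 2 * w < n) :
    ∃ (m : ℕ) (hm : 0 < m) (C : Fin m → Term n) (v : Fin m → Bool),
      (∀ j, termWidth (C j) ≤ w) ∧
      C ⟨m - 1, Nat.sub_lt hm one_pos⟩ = (fun _ => none) ∧
      ∀ (m' : ℕ) (hm' : 0 < m') (C' : Fin m' → Term n) (v' : Fin m' → Bool),
        (∀ j, termWidth (C' j) ≤ w) →
        C' ⟨m' - 1, Nat.sub_lt hm' one_pos⟩ = (fun _ => none) →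
        (m' : ℝ) < (n.choose w : ℝ) / (n : ℝ) ^ 2 →
        ∃ x, DLeval C v x ≠ DLeval C' v' x := by
  by_cases hM : n.choose w ≤ n ^ 2
  · -- trivial case: the size bound is vacuous
    refine ⟨1, one_pos, fun _ => fun _ => none, fun _ => false, ?_, ?_, ?_⟩
    · intro j; simp [termWidth]
    · rfl
    · intro m' hm' C' v' _ _ hlt
      exfalso
      have hn0 : 0 < n := by omega
      have hnR : (0 : ℝ) < (n : ℝ) ^ 2 := by positivity
      have h1 : (n.choose w : ℝ) / (n : ℝ) ^ 2 ≤ 1 := by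
        rw [div_le_one hnR]
        exact_mod_cast hM
      have h2 : (1 : ℝ) ≤ (m' : ℝ) := by exact_mod_cast hm'
      linarith
  · push_neg at hM
    have hn0 : 0 < n := by omega
    have hw2 : 2 ≤ w := by
      by_contra hw
      push_neg at hw
      interval_cases w
      · simp [Nat.choose_zero_right] at hM
        nlinarith
      · simp [Nat.choose_one_right] at hM
        nlinarith
    have hn5 : 5 ≤ n := by omega
    set M := n.choose w with hMdef
    set P := (Finset.univ : Finset (Fin n)).powersetCard w with hPdef
    have hPcard : P.card = M := by
      rw [hPdef, Finset.card_powersetCard, Finset.card_univ, Fintype.card_fin]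
    set S : Fin M → Finset (Fin n) :=
      fun j => ((P.equivFin.symm (Fin.cast hPcard.symm j)) : {x // x ∈ P}).val with hSdef
    have hSinj : Function.Injective S := by
      intro a b hab
      have h1 : P.equivFin.symm (Fin.cast hPcard.symm a)
          = P.equivFin.symm (Fin.cast hPcard.symm b) := by
        exact Subtype.ext hab
      have h2 := P.equivFin.symm.injective h1
      apply Fin.ext
      have hv := congrArg Fin.val h2
      simpa using hv
    have hSmem : ∀ j, S j ∈ P := fun j => (P.equivFin.symm (Fin.cast hPcard.symm j)).2
    have hScard : ∀ j, (S j).card = w := by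
      intro j
      have hmem := hSmem j
      rw [hPdef, Finset.mem_powersetCard] at hmem
      exact hmem.2
    set T := M / n ^ 2 with hTdef
    set A : Finset ((Fin n → Bool) → Bool) :=
      (Finset.range (T + 1)).biUnion
        (fun m' => Finset.image
          (fun p : (Fin m' → Term n) × (Fin m' → Bool) => DLeval p.1 p.2) Finset.univ)
      with hAdef
    have hn2pos : 0 < n ^ 2 := by positivity
    have key : 2 * n * (T + 1) ≤ M := by
      have hT : T * n ^ 2 ≤ M := Nat.div_mul_le_self M (n ^ 2)
      have h4M : 4 * M ≤ n * M := Nat.mul_le_mul_right M (by omega)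
      have h1 : n * (2 * n * (T + 1)) ≤ n * M := by
        have e : n * (2 * n * (T + 1)) = 2 * (T * n ^ 2) + 2 * n ^ 2 := by ring
        rw [e]
        omega
      exact Nat.le_of_mul_le_mul_left h1 hn0
    have hAcard : A.card < 2 ^ (M + 1) := by
      have step1 : A.card ≤ ∑ m' ∈ Finset.range (T + 1), (3 ^ n * 2) ^ m' := by
        refine le_trans Finset.card_biUnion_le ?_
        apply Finset.sum_le_sum
        intro m' _
        refine le_trans Finset.card_image_le ?_
        rw [Finset.card_univ]
        have hc : Fintype.card ((Fin m' → Term n) × (Fin m' → Bool)) = (3 ^ n * 2) ^ m' := by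
          simp [Fintype.card_fun, mul_pow]
        rw [hc]
      have step2 : ∑ m' ∈ Finset.range (T + 1), (3 ^ n * 2) ^ m' < (3 ^ n * 2) ^ (T + 1) :=
        geom_sum_lt_pow (by nlinarith [Nat.one_le_two_pow (n := n), (Nat.pow_pos (show 0 < 3 by norm_num) : 0 < 3 ^ n)])
      have step3 : (3 ^ n * 2) ^ (T + 1) ≤ (4 ^ n) ^ (T + 1) :=
        Nat.pow_le_pow_left (two_three_pow_le (by omega)) _
      have step4 : (4 ^ n) ^ (T + 1) = 2 ^ (2 * n * (T + 1)) := by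
        rw [show (4 : ℕ) = 2 ^ 2 by norm_num, ← pow_mul, ← pow_mul]
        ring_nf
      have step5 : (2 : ℕ) ^ (2 * n * (T + 1)) ≤ 2 ^ M :=
        Nat.pow_le_pow_right (by omega) key
      have step6 : (2 : ℕ) ^ M < 2 ^ (M + 1) :=
        Nat.pow_lt_pow_right one_lt_two (Nat.lt_succ_self M)
      omega
    have hinjPhi := dleval_bigC_inj S hSinj hScard (by omega : 0 < w)
    have hex : ∃ v : Fin (M + 1) → Bool, DLeval (bigC S) v ∉ A := by
      by_contra hcon
      push_neg at hcon
      have hsub : Finset.image (fun v : Fin (M + 1) → Bool => DLeval (bigC S) v)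
          Finset.univ ⊆ A := by
        intro f hf
        rw [Finset.mem_image] at hf
        obtain ⟨v, -, rfl⟩ := hf
        exact hcon v
      have hle := Finset.card_le_card hsub
      rw [Finset.card_image_of_injective _ hinjPhi, Finset.card_univ] at hle
      have hcv : Fintype.card (Fin (M + 1) → Bool) = 2 ^ (M + 1) := by simp
      omega
    obtain ⟨v, hv⟩ := hex
    refine ⟨M + 1, Nat.succ_pos _, bigC S, v, ?_, ?_, ?_⟩
    · intro j
      by_cases hj : (j : ℕ) < M
      · have hCj : bigC S j = termOf (S ⟨j, hj⟩) := dif_pos hj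
        rw [hCj, termWidth_termOf, hScard]
      · have hCj : bigC S j = fun _ => none := dif_neg hj
        rw [hCj]
        simp [termWidth]
    · have hnot : ¬ ((⟨M + 1 - 1, Nat.sub_lt (Nat.succ_pos M) one_pos⟩ : Fin (M + 1)) : ℕ) < M := by
        simp
      exact dif_neg hnot
    · intro m' hm' C' v' _ _ hlt
      have hnR : (0 : ℝ) < (n : ℝ) ^ 2 := by positivity
      rw [lt_div_iff₀ hnR] at hlt
      have hm'n : m' * n ^ 2 < M := by exact_mod_cast hlt
      have hm'T : m' ≤ T := by
        rw [hTdef]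
        exact (Nat.le_div_iff_mul_le hn2pos).mpr (le_of_lt hm'n)
      have hmemA : DLeval C' v' ∈ A := by
        rw [hAdef]
        apply Finset.mem_biUnion.mpr
        exact ⟨m', Finset.mem_range.mpr (by omega),
          Finset.mem_image.mpr ⟨(C', v'), Finset.mem_univ _, rfl⟩⟩
      have hne : DLeval (bigC S) v ≠ DLeval C' v' := fun h => hv (h ▸ hmemA)
      by_contra hcon
      push_neg at hcon
      exact hne (funext hcon)
end
end

section
/- Let L be a decision list of size m in which all indices are useful, sorted so that p_L(j_1) ≥ ... ≥ p_L(j_m), let β ∈ (0, 1/2], and let t ≥ 4·(1/ε)^{4β}·(4/β)^{3w}. Then the total hit probability of all but the t most-hit rules is at most ε: ∑_{k > t} p_L(j_k) ≤ ε. -/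
open Finset
open scoped Classical BigOperators

noncomputable section

-- ===================== my auxiliary material =====================

namespace TailHit

/-! ### Basic decision-list lemmas -/

lemma termSat_last {n m : ℕ} (C : Fin m → Term n) (hm : 0 < m)
    (hlast : C ⟨m - 1, Nat.sub_lt hm one_pos⟩ = fun _ => none) (x : Fin n → Bool) :
    TermSat (C ⟨m - 1, Nat.sub_lt hm one_pos⟩) x := by
  intro i b hib
  rw [hlast] at hib
  exact absurd hib (by simp)

lemma indSet_nonempty {n m : ℕ} (C : Fin m → Term n) (hm : 0 < m)
    (hlast : C ⟨m - 1, Nat.sub_lt hm one_pos⟩ = fun _ => none) (x : Fin n → Bool) :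
    {i : ℕ | ∃ h : i < m, TermSat (C ⟨i, h⟩) x}.Nonempty :=
  ⟨m - 1, ⟨Nat.sub_lt hm one_pos, termSat_last C hm hlast x⟩⟩

lemma termSat_of_DLind {n m : ℕ} (C : Fin m → Term n) (hm : 0 < m)
    (hlast : C ⟨m - 1, Nat.sub_lt hm one_pos⟩ = fun _ => none) {x : Fin n → Bool}
    {i : Fin m} (h : DLind C x = i.val) : TermSat (C i) x := by
  have hmem := Nat.sInf_mem (indSet_nonempty C hm hlast x)
  rw [show sInf {i : ℕ | ∃ h : i < m, TermSat (C ⟨i, h⟩) x} = DLind C x from rfl, h] at hmem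
  obtain ⟨h1, h2⟩ := hmem
  rwa [Fin.eta] at h2

lemma not_termSat_of_lt {n m : ℕ} (C : Fin m → Term n) {x : Fin n → Bool}
    {i : Fin m} (h : DLind C x = i.val) {jj : Fin m} (hj : jj.val < i.val) :
    ¬ TermSat (C jj) x := by
  intro hsat
  have : jj.val < sInf {i : ℕ | ∃ h : i < m, TermSat (C ⟨i, h⟩) x} := by
    rw [show sInf {i : ℕ | ∃ h : i < m, TermSat (C ⟨i, h⟩) x} = DLind C x from rfl, h]; exact hj
  exact Nat.notMem_of_lt_sInf this ⟨jj.isLt, by rwa [Fin.eta]⟩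

/-! ### Scalar inequalities -/

lemma rpow_self_le {t θ : ℝ} (h0 : 0 ≤ t) (h1 : t ≤ 1) (hθ0 : 0 < θ) (hθ1 : θ ≤ 1) :
    t ≤ t ^ θ := by
  rcases eq_or_lt_of_le h0 with h | h
  · rw [← h, Real.zero_rpow (ne_of_gt hθ0)]
  · calc t = t ^ (1 : ℝ) := (Real.rpow_one t).symm
      _ ≤ t ^ θ := Real.rpow_le_rpow_of_exponent_ge h h1 hθ1

lemma key_scalar {β a b : ℝ} (hβ0 : 0 < β) (hβ2 : β ≤ 1 / 2) (hb : 0 ≤ b) (hba : b ≤ a) :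
    ((a + b) / 2) ^ (2 * β / (1 + β)) ≤
      (1 - β / 2) * a ^ (2 * β / (1 + β)) + β / 2 * b ^ (2 * β / (1 + β)) := by
  set θ : ℝ := 2 * β / (1 + β) with hθ
  have hβ1 : (0:ℝ) < 1 + β := by linarith
  have hθ0 : 0 < θ := by positivity
  have hθ1 : θ ≤ 1 := by rw [hθ, div_le_one hβ1]; linarith
  have hβθ : β ≤ θ := by rw [hθ, le_div_iff₀ hβ1]; nlinarith
  have ha : 0 ≤ a := le_trans hb hba
  rcases eq_or_lt_of_le ha with h | hapos
  · have hb0 : b = 0 := le_antisymm (h ▸ hba) hb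
    rw [← h, hb0]
    norm_num [Real.zero_rpow (ne_of_gt hθ0)]
  · set t : ℝ := b / a with htdef
    have ht0 : 0 ≤ t := div_nonneg hb (le_of_lt hapos)
    have ht1 : t ≤ 1 := div_le_one_of_le₀ hba (le_of_lt hapos)
    have ha' : a ≠ 0 := ne_of_gt hapos
    have hab : a + b = a * (1 + t) := by rw [htdef]; field_simp
    have hbt : b = a * t := by rw [htdef]; field_simp
    have e1 : ((a + b) / 2) ^ θ = a ^ θ * ((1 + t) / 2) ^ θ := by
      rw [hab, mul_div_assoc, Real.mul_rpow ha (by positivity)]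
    have hs0 : (0:ℝ) ≤ (1 + t) / 2 := by positivity
    have am : ((1 + t) / 2) ^ θ ≤ θ * ((1 + t) / 2) + (1 - θ) := by
      have h := Real.geom_mean_le_arith_mean2_weighted (w₁ := θ) (w₂ := 1 - θ)
        (p₁ := (1 + t) / 2) (p₂ := 1) (le_of_lt hθ0) (by linarith) hs0 zero_le_one (by ring)
      simpa using h
    have tt : t ≤ t ^ θ := rpow_self_le ht0 ht1 hθ0 hθ1
    have e2 : b ^ θ = a ^ θ * t ^ θ := by rw [hbt, Real.mul_rpow ha ht0]
    have hpow : 0 ≤ a ^ θ := Real.rpow_nonneg ha θ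
    rw [e1, e2]
    have h1 : 0 ≤ (θ - β) * (1 - t) := mul_nonneg (by linarith) (by linarith)
    have h2 : 0 ≤ β * (t ^ θ - t) := mul_nonneg (le_of_lt hβ0) (by linarith)
    have key : θ * ((1 + t) / 2) + (1 - θ) ≤ (1 - β / 2) + β / 2 * t ^ θ := by nlinarith
    calc a ^ θ * ((1 + t) / 2) ^ θ ≤ a ^ θ * ((1 - β / 2) + β / 2 * t ^ θ) :=
          mul_le_mul_of_nonneg_left (le_trans am key) hpow
      _ = (1 - β / 2) * a ^ θ + β / 2 * (a ^ θ * t ^ θ) := by ring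

end TailHit

namespace TailHit

/-! ### The `P`/`Q` functionals over partial restrictions -/

noncomputable def pf : Option Bool → Bool → ℝ
  | none, _ => 1 / 2
  | some c, b => if b = c then 1 else 0

noncomputable def qf (β : ℝ) : Option Bool → Option Bool → ℝ
  | none, r => if r = none then 1 - β else β / 2
  | some c, r => if r = some c then 1 else 0

lemma pf_nonneg (s : Option Bool) (b : Bool) : 0 ≤ pf s b := by
  cases s <;> simp [pf] <;> split_ifs <;> norm_num

lemma qf_nonneg {β : ℝ} (hβ0 : 0 < β) (hβ2 : β ≤ 1 / 2) (s r : Option Bool) :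
    0 ≤ qf β s r := by
  cases s <;> simp [qf] <;> split_ifs <;> norm_num <;> linarith

noncomputable def Pp {n m : ℕ} (C : Fin m → Term n) (i0 : Fin m) (σ : Restriction n) : ℝ :=
  ∑ x : Fin n → Bool, (∏ v, pf (σ v) (x v)) * (if DLind C x = i0.val then 1 else 0)

noncomputable def Qq {n m : ℕ} (β : ℝ) (C : Fin m → Term n) (i0 : Fin m)
    (σ : Restriction n) : ℝ :=
  ∑ ρ : Restriction n, (∏ v, qf β (σ v) (ρ v)) * (if Useful C ρ i0 then 1 else 0)

lemma Pp_nonneg {n m : ℕ} (C : Fin m → Term n) (i0 : Fin m) (σ : Restriction n) :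
    0 ≤ Pp C i0 σ := by
  apply Finset.sum_nonneg
  intro x _
  apply mul_nonneg (Finset.prod_nonneg fun v _ => pf_nonneg _ _)
  split_ifs <;> norm_num

/-- rewriting a composite with an updated restriction as an updated function -/
lemma comp_update {n : ℕ} {γ δ : Type*} (F : Option Bool → γ → δ) (σ : Restriction n)
    (v : Fin n) (s : Option Bool) (x : Fin n → γ) :
    (fun i => F (Function.update σ v s i) (x i)) =
      Function.update (fun i => F (σ i) (x i)) v (F s (x v)) := by
  funext i
  by_cases h : i = v
  · subst h; simp
  · simp [Function.update_of_ne h]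

lemma prod_pf_update {n : ℕ} (σ : Restriction n) (v : Fin n) (s : Option Bool)
    (x : Fin n → Bool) :
    (∏ i, pf (Function.update σ v s i) (x i)) =
      pf s (x v) * ∏ i ∈ univ.erase v, pf (σ i) (x i) := by
  rw [show (fun i => pf (Function.update σ v s i) (x i)) =
      Function.update (fun i => pf (σ i) (x i)) v (pf s (x v)) from comp_update pf σ v s x]
  rw [Finset.prod_update_of_mem (Finset.mem_univ v)]
  congr 1
  simp [Finset.sdiff_singleton_eq_erase]

lemma prod_qf_update {n : ℕ} (β : ℝ) (σ : Restriction n) (v : Fin n) (s : Option Bool)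
    (ρ : Restriction n) :
    (∏ i, qf β (Function.update σ v s i) (ρ i)) =
      qf β s (ρ v) * ∏ i ∈ univ.erase v, qf β (σ i) (ρ i) := by
  rw [show (fun i => qf β (Function.update σ v s i) (ρ i)) =
      Function.update (fun i => qf β (σ i) (ρ i)) v (qf β s (ρ v)) from comp_update (qf β) σ v s ρ]
  rw [Finset.prod_update_of_mem (Finset.mem_univ v)]
  congr 1
  simp [Finset.sdiff_singleton_eq_erase]

lemma Pp_split {n m : ℕ} (C : Fin m → Term n) (i0 : Fin m) (σ : Restriction n)
    (v : Fin n) (hv : σ v = none) :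
    Pp C i0 σ = (Pp C i0 (Function.update σ v (some false)) +
      Pp C i0 (Function.update σ v (some true))) / 2 := by
  unfold Pp
  rw [← Finset.sum_add_distrib, Finset.sum_div]
  apply Finset.sum_congr rfl
  intro x _
  have key : (∏ i, pf (σ i) (x i)) =
      ((∏ i, pf (Function.update σ v (some false) i) (x i)) +
       (∏ i, pf (Function.update σ v (some true) i) (x i))) / 2 := by
    rw [prod_pf_update, prod_pf_update,
      ← Finset.mul_prod_erase univ (fun i => pf (σ i) (x i)) (Finset.mem_univ v), hv]
    cases hxv : x v <;> simp [pf, hxv] <;> ring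
  rw [key]
  ring

lemma useful_of_update {n m : ℕ} (C : Fin m → Term n) (i0 : Fin m) (ρ : Restriction n)
    (v : Fin n) (hρv : ρ v = none) (b : Bool)
    (h : Useful C (Function.update ρ v (some b)) i0) : Useful C ρ i0 := by
  obtain ⟨x, hcx, hix⟩ := h
  refine ⟨x, fun i b' hib' => hcx i b' ?_, hix⟩
  have hiv : i ≠ v := fun h => by rw [h, hρv] at hib'; exact absurd hib' (by simp)
  rw [Function.update_of_ne hiv]; exact hib'

lemma update_update_cancel {α β : Type*} [DecidableEq α] (g : α → β) (v : α) (s s' : β)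
    (h : g v = s') : Function.update (Function.update g v s) v s' = g := by
  funext i
  by_cases hiv : i = v
  · subst hiv; simp [h]
  · simp [Function.update_of_ne hiv]

lemma Qq_step {n m : ℕ} (β : ℝ) (hβ0 : 0 < β) (hβ2 : β ≤ 1 / 2) (C : Fin m → Term n)
    (i0 : Fin m) (σ : Restriction n) (v : Fin n) (hv : σ v = none) (b : Bool) :
    (1 - β) * Qq β C i0 (Function.update σ v (some b)) +
      β / 2 * (Qq β C i0 (Function.update σ v (some false)) +
               Qq β C i0 (Function.update σ v (some true))) ≤ Qq β C i0 σ := by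
  classical
  set U : Restriction n → ℝ := fun ρ => if Useful C ρ i0 then 1 else 0 with hU
  set R : Restriction n → ℝ := fun ρ => ∏ i ∈ univ.erase v, qf β (σ i) (ρ i) with hR
  have hRnn : ∀ ρ, 0 ≤ R ρ := fun ρ =>
    Finset.prod_nonneg fun i _ => qf_nonneg hβ0 hβ2 _ _
  have hUnn : ∀ ρ, 0 ≤ U ρ := by
    intro ρ
    by_cases h : Useful C ρ i0 <;> simp [hU, h]
  have hQb : ∀ b' : Bool, Qq β C i0 (Function.update σ v (some b')) =
      ∑ ρ : Restriction n, (if ρ v = some b' then 1 else 0) * (R ρ * U ρ) := by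
    intro b'
    unfold Qq
    apply Finset.sum_congr rfl
    intro ρ _
    rw [prod_qf_update]
    have : qf β (some b') (ρ v) = if ρ v = some b' then 1 else 0 := by simp [qf]
    rw [this, mul_assoc]
  have hQσ : Qq β C i0 σ = ∑ ρ : Restriction n, qf β none (ρ v) * (R ρ * U ρ) := by
    unfold Qq
    apply Finset.sum_congr rfl
    intro ρ _
    rw [← Finset.mul_prod_erase univ (fun i => qf β (σ i) (ρ i)) (Finset.mem_univ v), hv,
      mul_assoc]
  set Qstar : ℝ := ∑ ρ : Restriction n, (if ρ v = none then 1 else 0) * (R ρ * U ρ) with hQs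
  have hsplit : Qq β C i0 σ = (1 - β) * Qstar +
      β / 2 * ((∑ ρ : Restriction n, (if ρ v = some false then 1 else 0) * (R ρ * U ρ)) +
               (∑ ρ : Restriction n, (if ρ v = some true then 1 else 0) * (R ρ * U ρ))) := by
    rw [hQσ, hQs, Finset.mul_sum, ← Finset.sum_add_distrib, Finset.mul_sum,
      ← Finset.sum_add_distrib]
    apply Finset.sum_congr rfl
    intro ρ _
    rcases hρv : ρ v with _ | b' <;> [skip; rcases b' with _ | _] <;> simp [qf, hρv] <;> ring
  -- Qstar dominates each fixed branch
  have hmono : ∀ b' : Bool,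
      (∑ ρ : Restriction n, (if ρ v = some b' then 1 else 0) * (R ρ * U ρ)) ≤ Qstar := by
    intro b'
    have e1 : (∑ ρ : Restriction n, (if ρ v = some b' then 1 else 0) * (R ρ * U ρ)) =
        ∑ ρ ∈ univ.filter (fun ρ : Restriction n => ρ v = some b'), R ρ * U ρ := by
      rw [Finset.sum_filter]
      apply Finset.sum_congr rfl
      intro ρ _
      split_ifs <;> simp
    have e2 : Qstar = ∑ ρ ∈ univ.filter (fun ρ : Restriction n => ρ v = none), R ρ * U ρ := by
      rw [hQs, Finset.sum_filter]
      apply Finset.sum_congr rfl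
      intro ρ _
      split_ifs <;> simp
    rw [e1, e2]
    have e3 : (∑ ρ ∈ univ.filter (fun ρ : Restriction n => ρ v = some b'), R ρ * U ρ) =
        ∑ ρ ∈ univ.filter (fun ρ : Restriction n => ρ v = none),
          R ρ * U (Function.update ρ v (some b')) := by
      refine Finset.sum_bij' (fun ρ _ => Function.update ρ v none)
        (fun ρ _ => Function.update ρ v (some b')) ?_ ?_ ?_ ?_ ?_
      · intro ρ hρ; simp
      · intro ρ hρ; simp
      · intro ρ hρ
        simp only [Finset.mem_filter, Finset.mem_univ, true_and] at hρ
        exact update_update_cancel ρ v none (some b') hρ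
      · intro ρ hρ
        simp only [Finset.mem_filter, Finset.mem_univ, true_and] at hρ
        exact update_update_cancel ρ v (some b') none hρ
      · intro ρ hρ
        simp only [Finset.mem_filter, Finset.mem_univ, true_and] at hρ
        have hRe : R (Function.update ρ v none) = R ρ := by
          rw [hR]
          apply Finset.prod_congr rfl
          intro i hi
          rw [Function.update_of_ne (Finset.mem_erase.mp hi).1]
        have hUe : U (Function.update (Function.update ρ v none) v (some b')) = U ρ := by
          rw [update_update_cancel ρ v none (some b') hρ]
        rw [hRe, hUe]
    rw [e3]
    apply Finset.sum_le_sum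
    intro ρ hρ
    simp only [Finset.mem_filter, Finset.mem_univ, true_and] at hρ
    apply mul_le_mul_of_nonneg_left _ (hRnn ρ)
    by_cases h1 : Useful C (Function.update ρ v (some b')) i0
    · have h2 : Useful C ρ i0 := useful_of_update C i0 ρ v hρ b' h1
      simp [hU, h1, h2]
    · by_cases h2 : Useful C ρ i0 <;> simp [hU, h1, h2]
  rw [hsplit]
  have h1 : Qq β C i0 (Function.update σ v (some b)) ≤ Qstar := by
    rw [hQb b]; exact hmono b
  have h2 : Qq β C i0 (Function.update σ v (some false)) =
      ∑ ρ : Restriction n, (if ρ v = some false then 1 else 0) * (R ρ * U ρ) := hQb false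
  have h3 : Qq β C i0 (Function.update σ v (some true)) =
      ∑ ρ : Restriction n, (if ρ v = some true then 1 else 0) * (R ρ * U ρ) := hQb true
  rw [h2, h3]
  have : (1 - β) * Qq β C i0 (Function.update σ v (some b)) ≤ (1 - β) * Qstar :=
    mul_le_mul_of_nonneg_left h1 (by linarith)
  linarith

end TailHit

namespace TailHit

/-! ### Base case of the induction -/

lemma pr_eq_sum {n : ℕ} (P : (Fin n → Bool) → Prop) :
    pr n P = ∑ x : Fin n → Bool, if P x then (1/2 : ℝ) ^ n else 0 := by
  unfold pr
  rw [← Finset.sum_filter, Finset.sum_const, nsmul_eq_mul]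
  rw [one_div, inv_pow, div_eq_mul_inv]

lemma base_eq {n m : ℕ} (β : ℝ) (C : Fin m → Term n) (i0 : Fin m) (σ : Restriction n)
    (hσ : ∀ i, σ i ≠ none) :
    Pp C i0 σ = Qq β C i0 σ ∧ (Pp C i0 σ = 0 ∨ Pp C i0 σ = 1) := by
  classical
  set x₀ : Fin n → Bool := fun i => (σ i).getD true with hx₀
  have hx₀v : ∀ i c, σ i = some c → x₀ i = c := by
    intro i c h; rw [hx₀]; simp [h]
  have hPp : Pp C i0 σ = if DLind C x₀ = i0.val then 1 else 0 := by
    unfold Pp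
    rw [Finset.sum_eq_single x₀]
    · have : (∏ v, pf (σ v) (x₀ v)) = 1 := by
        apply Finset.prod_eq_one
        intro i _
        obtain ⟨c, hc⟩ := Option.ne_none_iff_exists'.mp (hσ i)
        rw [hc]
        simp [pf, hx₀v i c hc]
      rw [this, one_mul]
    · intro x _ hx
      have : ∃ i, x i ≠ x₀ i := by
        by_contra hcon
        push_neg at hcon
        exact hx (funext hcon)
      obtain ⟨i, hi⟩ := this
      obtain ⟨c, hc⟩ := Option.ne_none_iff_exists'.mp (hσ i)
      have : pf (σ i) (x i) = 0 := by
        rw [hc]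
        have : x i ≠ c := by rw [← hx₀v i c hc]; exact hi
        simp [pf, this]
      rw [Finset.prod_eq_zero (Finset.mem_univ i) this, zero_mul]
    · intro h
      exact absurd (Finset.mem_univ x₀) h
  have hQq : Qq β C i0 σ = if Useful C σ i0 then 1 else 0 := by
    unfold Qq
    rw [Finset.sum_eq_single σ]
    · have : (∏ v, qf β (σ v) (σ v)) = 1 := by
        apply Finset.prod_eq_one
        intro i _
        obtain ⟨c, hc⟩ := Option.ne_none_iff_exists'.mp (hσ i)
        rw [hc]
        simp [qf]
      rw [this, one_mul]
    · intro ρ _ hρ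
      have : ∃ i, ρ i ≠ σ i := by
        by_contra hcon
        push_neg at hcon
        exact hρ (funext hcon)
      obtain ⟨i, hi⟩ := this
      obtain ⟨c, hc⟩ := Option.ne_none_iff_exists'.mp (hσ i)
      have hz : qf β (σ i) (ρ i) = 0 := by
        rw [hc]
        have : ρ i ≠ some c := by rw [← hc]; exact hi
        simp [qf, this]
      rw [Finset.prod_eq_zero (Finset.mem_univ i) hz, zero_mul]
    · intro h
      exact absurd (Finset.mem_univ σ) h
  have hequiv : Useful C σ i0 ↔ DLind C x₀ = i0.val := by
    constructor
    · rintro ⟨x, hcx, hix⟩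
      have : x = x₀ := by
        funext i
        obtain ⟨c, hc⟩ := Option.ne_none_iff_exists'.mp (hσ i)
        rw [hcx i c hc, hx₀v i c hc]
      rwa [← this]
    · intro h
      exact ⟨x₀, fun i c hc => hx₀v i c hc, h⟩
  constructor
  · rw [hPp, hQq]
    by_cases h : DLind C x₀ = i0.val
    · simp [h, hequiv.mpr h]
    · have : ¬ Useful C σ i0 := fun hu => h (hequiv.mp hu)
      simp [h, this]
  · rw [hPp]
    split_ifs <;> simp

/-! ### The main induction: ingredient (i) -/

lemma stars_update {n : ℕ} (σ : Restriction n) (v : Fin n) (hv : σ v = none) (b : Bool) :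
    stars (Function.update σ v (some b)) = stars σ - 1 := by
  unfold stars
  have he : (univ.filter fun i => Function.update σ v (some b) i = none) =
      (univ.filter fun i => σ i = none).erase v := by
    ext i
    simp only [Finset.mem_filter, Finset.mem_univ, true_and, Finset.mem_erase]
    by_cases h : i = v
    · subst h; simp
    · rw [Function.update_of_ne h]; tauto
  rw [he, Finset.card_erase_of_mem]
  simp [hv]

lemma main_ineq {n m : ℕ} (β : ℝ) (hβ0 : 0 < β) (hβ2 : β ≤ 1 / 2) (C : Fin m → Term n)
    (i0 : Fin m) (σ : Restriction n) :
    (Pp C i0 σ) ^ (2 * β / (1 + β)) ≤ Qq β C i0 σ := by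
  classical
  suffices H : ∀ (k : ℕ) (σ : Restriction n), stars σ = k →
      (Pp C i0 σ) ^ (2 * β / (1 + β)) ≤ Qq β C i0 σ from H (stars σ) σ rfl
  intro k
  induction k with
  | zero =>
    intro σ hσ
    have hne : ∀ i, σ i ≠ none := by
      intro i hin
      have : i ∈ univ.filter fun i => σ i = none := by simp [hin]
      rw [show (univ.filter fun i => σ i = none) = ∅ from Finset.card_eq_zero.mp hσ] at this
      exact absurd this (Finset.notMem_empty i)
    obtain ⟨heq, hval⟩ := base_eq β C i0 σ hne
    rcases hval with h | h <;> rw [← heq, h]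
    · rw [Real.zero_rpow]
      positivity
    · rw [Real.one_rpow]
  | succ k ih =>
    intro σ hσ
    have hpos : 0 < (univ.filter fun i => σ i = none).card := by rw [show (univ.filter fun i => σ i = none).card = stars σ from rfl, hσ]; exact Nat.succ_pos k
    obtain ⟨v, hv⟩ := Finset.card_pos.mp hpos
    have hv : σ v = none := (Finset.mem_filter.mp hv).2
    have hst : ∀ b, stars (Function.update σ v (some b)) = k := by
      intro b; rw [stars_update σ v hv b, hσ]; omega
    have ih0 := ih (Function.update σ v (some false)) (hst false)
    have ih1 := ih (Function.update σ v (some true)) (hst true)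
    set θ : ℝ := 2 * β / (1 + β) with hθ
    set P0 := Pp C i0 (Function.update σ v (some false)) with hP0
    set P1 := Pp C i0 (Function.update σ v (some true)) with hP1
    have hsplitP : Pp C i0 σ = (P0 + P1) / 2 := Pp_split C i0 σ v hv
    have hP0n : 0 ≤ P0 := Pp_nonneg _ _ _
    have hP1n : 0 ≤ P1 := Pp_nonneg _ _ _
    rcases le_total P0 P1 with hle | hle
    · have hstep := Qq_step β hβ0 hβ2 C i0 σ v hv true
      have hscal : ((P1 + P0) / 2) ^ θ ≤ (1 - β / 2) * P1 ^ θ + β / 2 * P0 ^ θ :=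
        key_scalar hβ0 hβ2 hP0n hle
      have hcomb : (1 - β / 2) * P1 ^ θ + β / 2 * P0 ^ θ ≤
          (1 - β) * Qq β C i0 (Function.update σ v (some true)) +
            β / 2 * (Qq β C i0 (Function.update σ v (some false)) +
                     Qq β C i0 (Function.update σ v (some true))) := by
        have e : (1 - β / 2) * P1 ^ θ + β / 2 * P0 ^ θ =
            (1 - β) * P1 ^ θ + β / 2 * (P0 ^ θ + P1 ^ θ) := by ring
        rw [e]
        have t1 : (1 - β) * P1 ^ θ ≤ (1 - β) * Qq β C i0 (Function.update σ v (some true)) :=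
          mul_le_mul_of_nonneg_left ih1 (by linarith)
        have t2 : β / 2 * (P0 ^ θ + P1 ^ θ) ≤
            β / 2 * (Qq β C i0 (Function.update σ v (some false)) +
                     Qq β C i0 (Function.update σ v (some true))) :=
          mul_le_mul_of_nonneg_left (add_le_add ih0 ih1) (by linarith)
        linarith
      calc (Pp C i0 σ) ^ θ = ((P1 + P0) / 2) ^ θ := by rw [hsplitP, add_comm]
        _ ≤ _ := le_trans hscal (le_trans hcomb hstep)
    · have hstep := Qq_step β hβ0 hβ2 C i0 σ v hv false
      have hscal : ((P0 + P1) / 2) ^ θ ≤ (1 - β / 2) * P0 ^ θ + β / 2 * P1 ^ θ :=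
        key_scalar hβ0 hβ2 hP1n hle
      have hcomb : (1 - β / 2) * P0 ^ θ + β / 2 * P1 ^ θ ≤
          (1 - β) * Qq β C i0 (Function.update σ v (some false)) +
            β / 2 * (Qq β C i0 (Function.update σ v (some false)) +
                     Qq β C i0 (Function.update σ v (some true))) := by
        have e : (1 - β / 2) * P0 ^ θ + β / 2 * P1 ^ θ =
            (1 - β) * P0 ^ θ + β / 2 * (P0 ^ θ + P1 ^ θ) := by ring
        rw [e]
        have t1 : (1 - β) * P0 ^ θ ≤ (1 - β) * Qq β C i0 (Function.update σ v (some false)) :=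
          mul_le_mul_of_nonneg_left ih0 (by linarith)
        have t2 : β / 2 * (P0 ^ θ + P1 ^ θ) ≤
            β / 2 * (Qq β C i0 (Function.update σ v (some false)) +
                     Qq β C i0 (Function.update σ v (some true))) :=
          mul_le_mul_of_nonneg_left (add_le_add ih0 ih1) (by linarith)
        linarith
      calc (Pp C i0 σ) ^ θ = ((P0 + P1) / 2) ^ θ := by rw [hsplitP]
        _ ≤ _ := le_trans hscal (le_trans hcomb hstep)

/-- Ingredient (i): `p_L(i) ^ (2β/(1+β)) ≤ q_L(1-β, i)`. -/
lemma pL_rpow_le_qL {n m : ℕ} (β : ℝ) (hβ0 : 0 < β) (hβ2 : β ≤ 1 / 2)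
    (C : Fin m → Term n) (i0 : Fin m) :
    (pL C i0.val) ^ (2 * β / (1 + β)) ≤ qL C (1 - β) i0 := by
  classical
  have h := main_ineq β hβ0 hβ2 C i0 (fun _ => none)
  have hP : Pp C i0 (fun _ => none) = pL C i0.val := by
    have hconst : ∀ x : Fin n → Bool,
        (∏ v, pf ((fun _ => (none : Option Bool)) v) (x v)) = (1/2 : ℝ) ^ n := by
      intro x
      show (∏ _v : Fin n, ((1:ℝ)/2)) = (1/2 : ℝ) ^ n
      rw [Finset.prod_const]
      simp
    rw [show pL C i0.val = pr n (fun x => DLind C x = i0.val) from rfl, pr_eq_sum]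
    unfold Pp
    apply Finset.sum_congr rfl
    intro x _
    rw [hconst x]
    by_cases h : DLind C x = i0.val <;> simp [h]
  have hQ : Qq β C i0 (fun _ => none) = qL C (1 - β) i0 := by
    unfold Qq qL restW
    apply Finset.sum_congr rfl
    intro ρ _
    congr 1
    apply Finset.prod_congr rfl
    intro i _
    by_cases hρ : ρ i = none <;> simp [qf, hρ] <;> ring
  rwa [hP, hQ] at h

end TailHit

namespace TailHit

/-! ### Ingredient (ii): the encoding argument bounding `∑ᵢ q_L(1-β, i)` -/

def extR {n m : ℕ} (C : Fin m → Term n) (i : Fin m) (ρ : Restriction n) : Restriction n :=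
  fun v => if ρ v = none then C i v else ρ v

def Svars {n m : ℕ} (C : Fin m → Term n) (i : Fin m) (ρ : Restriction n) : Finset (Fin n) :=
  univ.filter fun v => ρ v = none ∧ C i v ≠ none

def varsOf {n m : ℕ} (C : Fin m → Term n) (i : Fin m) : Finset (Fin n) :=
  univ.filter fun v => C i v ≠ none

def FullSat {n m : ℕ} (C : Fin m → Term n) (jj : Fin m) (ρ' : Restriction n) : Prop :=
  ∀ v b, C jj v = some b → ρ' v = some b

def decIdx {n m : ℕ} (C : Fin m → Term n) (ρ' : Restriction n) : ℕ :=
  sInf {jj : ℕ | ∃ h : jj < m, FullSat C ⟨jj, h⟩ ρ'}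

lemma extR_eq_of_not_mem {n m : ℕ} (C : Fin m → Term n) (i : Fin m) (ρ : Restriction n)
    {v : Fin n} (hv : v ∉ Svars C i ρ) : extR C i ρ v = ρ v := by
  unfold extR
  by_cases h : ρ v = none
  · have : C i v = none := by
      by_contra hc
      exact hv (by simp [Svars, h, hc])
    rw [if_pos h, this, h]
  · rw [if_neg h]

lemma useful_fullSat {n m : ℕ} (C : Fin m → Term n) (hm : 0 < m)
    (hlast : C ⟨m - 1, Nat.sub_lt hm one_pos⟩ = fun _ => none) {i : Fin m} {ρ : Restriction n}
    (h : Useful C ρ i) : FullSat C i (extR C i ρ) := by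
  obtain ⟨x, hcx, hix⟩ := h
  have hsat : TermSat (C i) x := termSat_of_DLind C hm hlast hix
  intro v b hvb
  unfold extR
  by_cases hρ : ρ v = none
  · rw [if_pos hρ, hvb]
  · rw [if_neg hρ]
    obtain ⟨b', hb'⟩ := Option.ne_none_iff_exists'.mp hρ
    have h1 : x v = b' := hcx v b' hb'
    have h2 : x v = b := hsat v b hvb
    have hbb : b' = b := by rw [← h1]; exact h2
    rw [hb', hbb]

lemma useful_not_fullSat {n m : ℕ} (C : Fin m → Term n) (hm : 0 < m)
    (hlast : C ⟨m - 1, Nat.sub_lt hm one_pos⟩ = fun _ => none) {i : Fin m} {ρ : Restriction n}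
    (h : Useful C ρ i) {jj : Fin m} (hj : jj.val < i.val) : ¬ FullSat C jj (extR C i ρ) := by
  obtain ⟨x, hcx, hix⟩ := h
  have hsat : TermSat (C i) x := termSat_of_DLind C hm hlast hix
  have hns : ¬ TermSat (C jj) x := not_termSat_of_lt C hix hj
  intro hfs
  apply hns
  intro v b hvb
  have he : extR C i ρ v = some b := hfs v b hvb
  unfold extR at he
  by_cases hρ : ρ v = none
  · rw [if_pos hρ] at he
    exact hsat v b he
  · rw [if_neg hρ] at he
    exact hcx v b he

lemma decIdx_ext {n m : ℕ} (C : Fin m → Term n) (hm : 0 < m)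
    (hlast : C ⟨m - 1, Nat.sub_lt hm one_pos⟩ = fun _ => none) {i : Fin m} {ρ : Restriction n}
    (h : Useful C ρ i) : decIdx C (extR C i ρ) = i.val := by
  have hin : i.val ∈ {jj : ℕ | ∃ h : jj < m, FullSat C ⟨jj, h⟩ (extR C i ρ)} := by
    refine ⟨i.isLt, ?_⟩
    have := useful_fullSat C hm hlast h
    rwa [Fin.eta]
  apply le_antisymm (Nat.sInf_le hin)
  by_contra hcon
  push_neg at hcon
  have hne : {jj : ℕ | ∃ h : jj < m, FullSat C ⟨jj, h⟩ (extR C i ρ)}.Nonempty := ⟨i.val, hin⟩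
  obtain ⟨hlt, hfs⟩ := Nat.sInf_mem hne
  exact useful_not_fullSat C hm hlast h (jj := ⟨decIdx C (extR C i ρ), hlt⟩) hcon hfs

lemma restW_nonneg {n : ℕ} {β : ℝ} (hβ0 : 0 < β) (hβ2 : β ≤ 1 / 2) (ρ : Restriction n) :
    0 ≤ restW (1 - β) ρ := by
  apply Finset.prod_nonneg
  intro v _
  split_ifs <;> norm_num <;> linarith

lemma restW_ext {n m : ℕ} {β : ℝ} (hβ0 : 0 < β) (hβ2 : β ≤ 1 / 2) (C : Fin m → Term n)
    (i : Fin m) (ρ : Restriction n) :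
    restW (1 - β) ρ =
      (2 * (1 - β) / β) ^ (Svars C i ρ).card * restW (1 - β) (extR C i ρ) := by
  classical
  have hβ' : (0:ℝ) < 1 - β := by linarith
  set p : Fin n → Prop := fun v => ρ v = none ∧ C i v ≠ none with hp
  have hS : Svars C i ρ = univ.filter p := rfl
  set f : Fin n → ℝ := fun v => if ρ v = none then (1 - β) else (1 - (1 - β)) / 2 with hf
  set g : Fin n → ℝ := fun v => if extR C i ρ v = none then (1 - β) else (1 - (1 - β)) / 2 with hg
  have e1 : restW (1 - β) ρ = (∏ v ∈ univ.filter p, f v) * ∏ v ∈ univ.filter (fun v => ¬ p v), f v := by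
    rw [Finset.prod_filter_mul_prod_filter_not]
    rfl
  have e2 : restW (1 - β) (extR C i ρ) =
      (∏ v ∈ univ.filter p, g v) * ∏ v ∈ univ.filter (fun v => ¬ p v), g v := by
    rw [Finset.prod_filter_mul_prod_filter_not]
    rfl
  have hfg : ∀ v ∈ univ.filter (fun v => ¬ p v), f v = g v := by
    intro v hv
    simp only [Finset.mem_filter, Finset.mem_univ, true_and] at hv
    have he := extR_eq_of_not_mem C i ρ (v := v) (by rw [hS]; simp only [Finset.mem_filter, Finset.mem_univ, true_and]; exact hv)
    show (if ρ v = none then (1-β:ℝ) else (1 - (1 - β)) / 2)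
      = (if extR C i ρ v = none then (1-β:ℝ) else (1 - (1 - β)) / 2)
    rw [he]
  have hfS : ∀ v ∈ univ.filter p, f v = (1 - β) := by
    intro v hv
    simp only [Finset.mem_filter, Finset.mem_univ, true_and] at hv
    show (if ρ v = none then (1-β:ℝ) else (1 - (1 - β)) / 2) = 1 - β
    rw [if_pos hv.1]
  have hgS : ∀ v ∈ univ.filter p, g v = (1 - (1 - β)) / 2 := by
    intro v hv
    simp only [Finset.mem_filter, Finset.mem_univ, true_and] at hv
    have he : extR C i ρ v = C i v := by unfold extR; rw [if_pos hv.1]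
    show (if extR C i ρ v = none then (1-β:ℝ) else (1 - (1 - β)) / 2) = (1 - (1 - β)) / 2
    rw [he, if_neg hv.2]
  have c1 : (∏ v ∈ univ.filter p, f v) = (1 - β) ^ (univ.filter p).card := by
    rw [Finset.prod_congr rfl hfS, Finset.prod_const]
  have c2 : (∏ v ∈ univ.filter p, g v) = ((1 - (1 - β)) / 2) ^ (univ.filter p).card := by
    rw [Finset.prod_congr rfl hgS, Finset.prod_const]
  have hT := Finset.prod_congr rfl hfg
  rw [e1, e2, c1, c2, hT, hS]
  have hhalf : ((1 - (1 - β)) / 2) = β / 2 := by ring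
  rw [hhalf]
  have hfact : (1 - β : ℝ) = (2 * (1 - β) / β) * (β / 2) := by field_simp
  rw [show ((1-β:ℝ)) ^ (univ.filter p).card = ((2 * (1 - β) / β) * (β / 2)) ^ (univ.filter p).card from by rw [← hfact]]
  rw [mul_pow]
  ring

/-- Ingredient (ii): `∑ᵢ q_L(1-β, i) ≤ (4/β)^w`. -/
lemma sum_qL_le {n m w : ℕ} {β : ℝ} (hβ0 : 0 < β) (hβ2 : β ≤ 1 / 2) (C : Fin m → Term n)
    (hm : 0 < m) (hlast : C ⟨m - 1, Nat.sub_lt hm one_pos⟩ = fun _ => none)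
    (hw : ∀ j, termWidth (C j) ≤ w) :
    ∑ i : Fin m, qL C (1 - β) i ≤ (4 / β) ^ w := by
  classical
  set r : ℝ := 2 * (1 - β) / β with hr
  have hβ' : (0:ℝ) < 1 - β := by linarith
  have hr0 : 0 ≤ r := by positivity
  set A : Finset (Fin m × Restriction n) :=
    univ.filter (fun p => Useful C p.2 p.1) with hA
  have h1 : ∑ i : Fin m, qL C (1 - β) i = ∑ p ∈ A, restW (1 - β) p.2 := by
    unfold qL
    rw [hA, Finset.sum_filter, Fintype.sum_prod_type]
    apply Finset.sum_congr rfl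
    intro i _
    apply Finset.sum_congr rfl
    intro ρ _
    by_cases h : Useful C ρ i <;> simp [h]
  set decF : Restriction n → Fin m := fun ρ' => ⟨decIdx C ρ' % m, Nat.mod_lt _ hm⟩ with hdecF
  set Φ : Fin m × Restriction n → Restriction n × Finset (Fin n) :=
    fun p => (extR C p.1 p.2, Svars C p.1 p.2) with hΦ
  have hdec : ∀ p ∈ A, decF (extR C p.1 p.2) = p.1 := by
    intro p hp
    have hu : Useful C p.2 p.1 := (Finset.mem_filter.mp hp).2
    rw [hdecF]
    apply Fin.ext
    simp only
    rw [decIdx_ext C hm hlast hu, Nat.mod_eq_of_lt p.1.isLt]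
  have hinj : ∀ p ∈ A, ∀ p' ∈ A, Φ p = Φ p' → p = p' := by
    intro p hp p' hp' heq
    have he1 : extR C p.1 p.2 = extR C p'.1 p'.2 := congrArg Prod.fst heq
    have he2 : Svars C p.1 p.2 = Svars C p'.1 p'.2 := congrArg Prod.snd heq
    have hi : p.1 = p'.1 := by
      rw [← hdec p hp, ← hdec p' hp', he1]
    have hρ : p.2 = p'.2 := by
      funext v
      by_cases hv : v ∈ Svars C p.1 p.2
      · have hv' : v ∈ Svars C p'.1 p'.2 := he2 ▸ hv
        have e1 : p.2 v = none := (Finset.mem_filter.mp hv).2.1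
        have e2 : p'.2 v = none := (Finset.mem_filter.mp hv').2.1
        rw [e1, e2]
      · have hv' : v ∉ Svars C p'.1 p'.2 := he2 ▸ hv
        rw [← extR_eq_of_not_mem C p.1 p.2 hv, ← extR_eq_of_not_mem C p'.1 p'.2 hv', he1]
    exact Prod.ext hi hρ
  have h2 : ∑ p ∈ A, restW (1 - β) p.2 =
      ∑ q ∈ A.image Φ, r ^ q.2.card * restW (1 - β) q.1 := by
    rw [Finset.sum_image hinj]
    apply Finset.sum_congr rfl
    intro p _
    rw [hΦ]
    exact restW_ext hβ0 hβ2 C p.1 p.2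
  set T : Finset (Restriction n × Finset (Fin n)) :=
    univ.filter (fun q => q.2 ⊆ varsOf C (decF q.1)) with hT
  have h3 : A.image Φ ⊆ T := by
    intro q hq
    obtain ⟨p, hp, hpq⟩ := Finset.mem_image.mp hq
    rw [hT, Finset.mem_filter]
    refine ⟨Finset.mem_univ q, ?_⟩
    rw [← hpq]
    show Svars C p.1 p.2 ⊆ varsOf C (decF (extR C p.1 p.2))
    rw [hdec p hp]
    intro v hv
    simp only [Svars, Finset.mem_filter, Finset.mem_univ, true_and] at hv
    simp only [varsOf, Finset.mem_filter, Finset.mem_univ, true_and]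
    exact hv.2
  have h4 : ∑ q ∈ A.image Φ, r ^ q.2.card * restW (1 - β) q.1 ≤
      ∑ q ∈ T, r ^ q.2.card * restW (1 - β) q.1 := by
    apply Finset.sum_le_sum_of_subset_of_nonneg h3
    intro q _ _
    exact mul_nonneg (pow_nonneg hr0 _) (restW_nonneg hβ0 hβ2 q.1)
  have h5 : ∑ q ∈ T, r ^ q.2.card * restW (1 - β) q.1 =
      ∑ ρ' : Restriction n, restW (1 - β) ρ' *
        ∑ S ∈ (varsOf C (decF ρ')).powerset, r ^ S.card := by
    rw [hT, Finset.sum_filter, Fintype.sum_prod_type]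
    apply Finset.sum_congr rfl
    intro ρ' _
    rw [Finset.mul_sum]
    have : (varsOf C (decF ρ')).powerset =
        univ.filter (fun S : Finset (Fin n) => S ⊆ varsOf C (decF ρ')) := by
      ext S
      simp [Finset.mem_powerset]
    rw [this, Finset.sum_filter]
    apply Finset.sum_congr rfl
    intro S _
    by_cases h : S ⊆ varsOf C (decF ρ') <;> simp [h] <;> ring
  have h6 : ∀ V : Finset (Fin n), ∑ S ∈ V.powerset, r ^ S.card = (1 + r) ^ V.card := by
    intro V
    have h := Finset.prod_add (fun _ : Fin n => r) (fun _ : Fin n => (1:ℝ)) V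
    rw [Finset.prod_const] at h
    rw [add_comm 1 r, h]
    apply Finset.sum_congr rfl
    intro S _
    rw [Finset.prod_const, Finset.prod_const, one_pow, mul_one]
  have h7 : ∀ ρ' : Restriction n, (1 + r) ^ (varsOf C (decF ρ')).card ≤ (1 + r) ^ w := by
    intro ρ'
    apply pow_le_pow_right₀ (by linarith)
    have : (varsOf C (decF ρ')).card = termWidth (C (decF ρ')) := rfl
    rw [this]
    exact hw _
  have h8 : ∑ ρ' : Restriction n, restW (1 - β) ρ' = 1 := by
    unfold restW
    have h := Finset.prod_univ_sum (κ := fun _ : Fin n => Option Bool)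
      (fun _ => (univ : Finset (Option Bool)))
      (fun _ o => if o = none then (1 - β : ℝ) else (1 - (1 - β)) / 2)
    rw [Fintype.piFinset_univ] at h
    have hv : (∑ o : Option Bool, if o = none then (1 - β : ℝ) else (1 - (1 - β)) / 2) = 1 := by
      rw [Fintype.sum_option]
      simp
      ring
    calc (∑ ρ' : Restriction n, ∏ v : Fin n, if ρ' v = none then (1 - β : ℝ) else (1 - (1 - β)) / 2)
        = ∏ _v : Fin n, ∑ o : Option Bool, (if o = none then (1 - β : ℝ) else (1 - (1 - β)) / 2) :=
          h.symm
      _ = 1 := by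
          rw [Finset.prod_congr rfl (fun v _ => hv), Finset.prod_const, one_pow]
  calc ∑ i : Fin m, qL C (1 - β) i = ∑ p ∈ A, restW (1 - β) p.2 := h1
    _ = ∑ q ∈ A.image Φ, r ^ q.2.card * restW (1 - β) q.1 := h2
    _ ≤ ∑ q ∈ T, r ^ q.2.card * restW (1 - β) q.1 := h4
    _ = ∑ ρ' : Restriction n, restW (1 - β) ρ' *
        ∑ S ∈ (varsOf C (decF ρ')).powerset, r ^ S.card := h5
    _ ≤ ∑ ρ' : Restriction n, restW (1 - β) ρ' * (1 + r) ^ w := by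
        apply Finset.sum_le_sum
        intro ρ' _
        apply mul_le_mul_of_nonneg_left _ (restW_nonneg hβ0 hβ2 ρ')
        rw [h6]
        exact h7 ρ'
    _ = (1 + r) ^ w := by rw [← Finset.sum_mul, h8, one_mul]
    _ ≤ (4 / β) ^ w := by
        apply pow_le_pow_left₀ (by linarith)
        have e : 1 + r = (2 - β) / β := by rw [hr]; field_simp; ring
        rw [e, div_le_div_iff₀ hβ0 hβ0]
        nlinarith
  
end TailHit

namespace TailHit

lemma pL_nonneg {n m : ℕ} (C : Fin m → Term n) (i : ℕ) : 0 ≤ pL C i := by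
  unfold pL pr
  positivity

/-- total hit probability is at most 1 -/
lemma sum_pL_le_one {n m : ℕ} (C : Fin m → Term n) : ∑ i : Fin m, pL C i.val ≤ 1 := by
  classical
  unfold pL pr
  rw [← Finset.sum_div]
  rw [div_le_one (by positivity)]
  rw [← Nat.cast_sum]
  have hnat : (∑ i : Fin m, (Finset.univ.filter fun x => DLind C x = i.val).card)
      ≤ 2 ^ n := by
    have hdisj : ∀ i ∈ (univ : Finset (Fin m)), ∀ i' ∈ (univ : Finset (Fin m)), i ≠ i' →
        Disjoint (Finset.univ.filter fun x => DLind C x = i.val)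
          (Finset.univ.filter fun x => DLind C x = i'.val) := by
      intro i _ i' _ hii
      rw [Finset.disjoint_left]
      intro x hx hx'
      have h1 : DLind C x = i.val := (Finset.mem_filter.mp hx).2
      have h2 : DLind C x = i'.val := (Finset.mem_filter.mp hx').2
      exact hii (Fin.ext (by rw [← h1, ← h2]))
    calc (∑ i : Fin m, (Finset.univ.filter fun x => DLind C x = i.val).card)
        = ((univ : Finset (Fin m)).biUnion
            (fun i => Finset.univ.filter fun x => DLind C x = i.val)).card :=
          (Finset.card_biUnion hdisj).symm
      _ ≤ Fintype.card (Fin n → Bool) := Finset.card_le_univ _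
      _ = 2 ^ n := by simp [Fintype.card_fun]
  have h2n : ((2:ℝ))^n = ((2^n : ℕ) : ℝ) := by push_cast; rfl
  rw [h2n, Nat.cast_le]
  convert hnat using 4

/-- one step of the telescoping tail estimate -/
lemma tail_step {c : ℝ} (hc : 1 < c) {x : ℝ} (hx : 1 ≤ x) :
    (c - 1) * (x + 1) ^ (-c : ℝ) ≤ x ^ (1 - c) - (x + 1) ^ (1 - c) := by
  have hx0 : 0 < x := lt_of_lt_of_le one_pos hx
  have hy0 : 0 < x + 1 := by linarith
  set s : ℝ := 1 / (x + 1) with hs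
  have hs0 : 0 < s := by positivity
  have hs1 : s < 1 := by rw [hs, div_lt_one hy0]; linarith
  have h1s : 0 < 1 - s := by linarith
  have key : 1 + (c - 1) * s ≤ (1 - s) ^ (1 - c) := by
    have hlog : Real.log (1 - s) ≤ -s := by
      have := Real.log_le_sub_one_of_pos h1s
      linarith
    have h2 : (c - 1) * s ≤ Real.log (1 - s) * (1 - c) := by
      have h3 := mul_le_mul_of_nonneg_left hlog (by linarith : (0:ℝ) ≤ c - 1)
      nlinarith
    calc 1 + (c - 1) * s ≤ Real.exp ((c - 1) * s) := by
          have := Real.add_one_le_exp ((c - 1) * s)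
          linarith
      _ ≤ Real.exp (Real.log (1 - s) * (1 - c)) := Real.exp_le_exp.mpr h2
      _ = (1 - s) ^ (1 - c) := (Real.rpow_def_of_pos h1s _).symm
  have hxeq : x = (x + 1) * (1 - s) := by rw [hs]; field_simp; ring
  have hxp : x ^ (1 - c) = (x + 1) ^ (1 - c) * (1 - s) ^ (1 - c) := by
    rw [show x ^ (1-c) = ((x+1) * (1-s)) ^ (1-c) from by rw [← hxeq]]
    exact Real.mul_rpow (le_of_lt hy0) (le_of_lt h1s)
  have hyc : (x + 1) ^ (1 - c) * s = (x + 1) ^ (-c : ℝ) := by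
    rw [hs, one_div, ← Real.rpow_neg_one (x + 1), ← Real.rpow_add hy0]
    congr 1
    ring
  have hpow_pos : 0 < (x + 1) ^ (1 - c) := Real.rpow_pos_of_pos hy0 _
  calc (c - 1) * (x + 1) ^ (-c : ℝ) = (x + 1) ^ (1 - c) * ((c - 1) * s) := by
        rw [← hyc]; ring
    _ ≤ (x + 1) ^ (1 - c) * ((1 - s) ^ (1 - c) - 1) := by
        apply mul_le_mul_of_nonneg_left _ (le_of_lt hpow_pos)
        linarith
    _ = x ^ (1 - c) - (x + 1) ^ (1 - c) := by rw [hxp]; ring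

/-- the telescoped tail estimate -/
lemma tail_sum_le {c : ℝ} (hc : 1 < c) (t M : ℕ) (ht : 1 ≤ t) :
    ∑ u ∈ Finset.Ico t M, ((u : ℝ) + 1) ^ (-c : ℝ) ≤ (1 / (c - 1)) * (t : ℝ) ^ (1 - c) := by
  have hc0 : (0:ℝ) < c - 1 := by linarith
  set g : ℕ → ℝ := fun u => (u : ℝ) ^ (1 - c) with hg
  have step : ∀ u ∈ Finset.Ico t M,
      ((u : ℝ) + 1) ^ (-c : ℝ) ≤ (1 / (c - 1)) * (g u - g (u + 1)) := by
    intro u hu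
    have htu : t ≤ u := (Finset.mem_Ico.mp hu).1
    have hu1 : (1:ℝ) ≤ (u : ℝ) := by exact_mod_cast le_trans ht htu
    have hts := tail_step hc hu1
    have hgu : g (u + 1) = ((u : ℝ) + 1) ^ (1 - c) := by
      show (((u + 1 : ℕ)) : ℝ) ^ (1 - c) = ((u : ℝ) + 1) ^ (1 - c)
      push_cast
      rfl
    calc ((u : ℝ) + 1) ^ (-c : ℝ)
        = (1 / (c - 1)) * ((c - 1) * ((u : ℝ) + 1) ^ (-c : ℝ)) := by field_simp
      _ ≤ (1 / (c - 1)) * (g u - g (u + 1)) := by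
          apply mul_le_mul_of_nonneg_left _ (by positivity)
          rw [hgu]
          exact hts
  calc ∑ u ∈ Finset.Ico t M, ((u : ℝ) + 1) ^ (-c : ℝ)
      ≤ ∑ u ∈ Finset.Ico t M, (1 / (c - 1)) * (g u - g (u + 1)) := Finset.sum_le_sum step
    _ = (1 / (c - 1)) * ∑ u ∈ Finset.Ico t M, (g u - g (u + 1)) := by rw [Finset.mul_sum]
    _ ≤ (1 / (c - 1)) * (t : ℝ) ^ (1 - c) := by
        apply mul_le_mul_of_nonneg_left _ (by positivity)
        rw [Finset.sum_Ico_eq_sum_range]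
        have htele := Finset.sum_range_sub' (fun k => g (t + k)) (M - t)
        rw [show (∑ k ∈ Finset.range (M - t), (g (t + k) - g (t + k + 1)))
            = g (t + 0) - g (t + (M - t)) from htele]
        have hnn : 0 ≤ g (t + (M - t)) := Real.rpow_nonneg (by positivity) _
        have h0 : g (t + 0) = (t : ℝ) ^ (1 - c) := by
          show (((t + 0 : ℕ)) : ℝ) ^ (1 - c) = (t : ℝ) ^ (1 - c)
          norm_num
        linarith [hnn, h0]

end TailHit

set_option maxHeartbeats 1600000

theorem tail_hit_probability {n m w : ℕ} (C : Fin m → Term n)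
    (hw1 : 1 ≤ w) (hw : ∀ j, termWidth (C j) ≤ w)
    (hm : 0 < m) (hlast : C ⟨m - 1, Nat.sub_lt hm one_pos⟩ = fun _ => none)
    (huseful : ∀ i : Fin m, ∃ x, DLind C x = i.val)
    (j : Fin m → Fin m) (hjbij : Function.Bijective j)
    (hsort : ∀ a b : Fin m, a ≤ b → pL C (j b).val ≤ pL C (j a).val)
    (β ε : ℝ) (hβ0 : 0 < β) (hβ2 : β ≤ 1 / 2) (hε : 0 < ε)
    (t : ℕ) (ht : 4 * (1 / ε) ^ (4 * β) * (4 / β) ^ (3 * w) ≤ (t : ℝ)) :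
    ∑ k ∈ Finset.univ.filter (fun k : Fin m => t ≤ k.val), pL C (j k).val ≤ ε := by
  classical
  have hβ1 : (0:ℝ) < 1 + β := by linarith
  set θ : ℝ := 2 * β / (1 + β) with hθdef
  set c : ℝ := (1 + β) / (2 * β) with hcdef
  have hθ0 : 0 < θ := by rw [hθdef]; positivity
  have hθc : θ * c = 1 := by rw [hθdef, hcdef]; field_simp
  have hc1 : (1/2 : ℝ) ≤ c - 1 := by
    have e : c - 1 = (1 - β) / (2 * β) := by rw [hcdef]; field_simp; ring
    rw [e, le_div_iff₀ (by positivity)]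
    linarith
  have hc0 : (0:ℝ) < c - 1 := lt_of_lt_of_le one_half_pos hc1
  have hcgt : 1 < c := by linarith
  have hcpos : (0:ℝ) < c := by linarith
  have h4β : (1:ℝ) ≤ 4 / β := by rw [le_div_iff₀ hβ0]; linarith
  set B : ℝ := (4 / β) ^ w with hBdef
  have hB0 : (0:ℝ) < B := by rw [hBdef]; positivity
  -- (iii): position-wise bound
  have hsum : ∑ i : Fin m, (pL C i.val) ^ θ ≤ B := by
    calc ∑ i : Fin m, (pL C i.val) ^ θ ≤ ∑ i : Fin m, qL C (1 - β) i := by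
          apply Finset.sum_le_sum
          intro i _
          rw [hθdef]
          exact TailHit.pL_rpow_le_qL β hβ0 hβ2 C i
      _ ≤ B := TailHit.sum_qL_le hβ0 hβ2 C hm hlast hw
  have hposition : ∀ k : Fin m, pL C (j k).val ≤ (B / ((k.val : ℝ) + 1)) ^ c := by
    intro k
    have hk1 : (0:ℝ) < (k.val : ℝ) + 1 := by positivity
    have h1 : ((k.val : ℝ) + 1) * (pL C (j k).val) ^ θ ≤ B := by
      have e1 : ∑ _a ∈ Finset.Iic k, (pL C (j k).val) ^ θ
          = ((k.val : ℝ) + 1) * (pL C (j k).val) ^ θ := by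
        rw [Finset.sum_const, Fin.card_Iic, nsmul_eq_mul]
        push_cast
        ring
      calc ((k.val : ℝ) + 1) * (pL C (j k).val) ^ θ
          = ∑ _a ∈ Finset.Iic k, (pL C (j k).val) ^ θ := e1.symm
        _ ≤ ∑ a ∈ Finset.Iic k, (pL C (j a).val) ^ θ := by
            apply Finset.sum_le_sum
            intro a ha
            exact Real.rpow_le_rpow (TailHit.pL_nonneg C _)
              (hsort a k (Finset.mem_Iic.mp ha)) (le_of_lt hθ0)
        _ ≤ ∑ a : Fin m, (pL C (j a).val) ^ θ := by
            apply Finset.sum_le_sum_of_subset_of_nonneg (Finset.subset_univ _)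
            intro a _ _
            exact Real.rpow_nonneg (TailHit.pL_nonneg C _) θ
        _ = ∑ i : Fin m, (pL C i.val) ^ θ :=
            Function.Bijective.sum_comp hjbij (fun i => (pL C i.val) ^ θ)
        _ ≤ B := hsum
    have h2 : (pL C (j k).val) ^ θ ≤ B / ((k.val : ℝ) + 1) := by
      rw [le_div_iff₀ hk1]
      nlinarith [h1]
    calc pL C (j k).val = ((pL C (j k).val) ^ θ) ^ c := by
          rw [← Real.rpow_mul (TailHit.pL_nonneg C _), hθc, Real.rpow_one]
      _ ≤ (B / ((k.val : ℝ) + 1)) ^ c :=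
          Real.rpow_le_rpow (Real.rpow_nonneg (TailHit.pL_nonneg C _) θ) h2 (le_of_lt hcpos)
  rcases le_or_gt ε 1 with hε1 | hε1
  · -- main case : ε ≤ 1
    have h1ε : (1:ℝ) ≤ 1 / ε := by rw [le_div_iff₀ hε]; linarith
    have hx1 : (1:ℝ) ≤ (1/ε) ^ (4*β) := by
      calc (1:ℝ) = (1:ℝ) ^ (4*β) := (Real.one_rpow _).symm
        _ ≤ (1/ε) ^ (4*β) := Real.rpow_le_rpow zero_le_one h1ε (by linarith)
    have hy1 : (1:ℝ) ≤ (4/β) ^ (3*w) := by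
      calc (1:ℝ) = (1:ℝ) ^ (3*w) := (one_pow _).symm
        _ ≤ (4/β) ^ (3*w) := pow_le_pow_left₀ zero_le_one h4β _
    have ht4 : (4:ℝ) ≤ (t:ℝ) := by nlinarith [ht, hx1, hy1]
    have ht1 : 1 ≤ t := by exact_mod_cast (le_trans (by norm_num : (1:ℝ) ≤ 4) ht4)
    have htpos : (0:ℝ) < (t:ℝ) := lt_of_lt_of_le (by norm_num) ht4
    have hTc1pos : (0:ℝ) < (t:ℝ) ^ (c - 1) := Real.rpow_pos_of_pos htpos _
    have tb : (∑ k ∈ Finset.univ.filter (fun k : Fin m => t ≤ k.val), pL C (j k).val)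
        ≤ B ^ c * ((1/(c-1)) * (t:ℝ) ^ (1-c)) := by
      calc (∑ k ∈ Finset.univ.filter (fun k : Fin m => t ≤ k.val), pL C (j k).val)
          ≤ ∑ k ∈ Finset.univ.filter (fun k : Fin m => t ≤ k.val),
              (B / ((k.val : ℝ) + 1)) ^ c := Finset.sum_le_sum (fun k _ => hposition k)
        _ = ∑ u ∈ Finset.Ico t m, (B / ((u : ℝ) + 1)) ^ c := by
            refine Finset.sum_bij' (fun k _ => k.val)
              (fun u hu => (⟨u, (Finset.mem_Ico.mp hu).2⟩ : Fin m)) ?_ ?_ ?_ ?_ ?_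
            · intro k hk
              simp only [Finset.mem_filter, Finset.mem_univ, true_and] at hk
              rw [Finset.mem_Ico]
              exact ⟨hk, k.isLt⟩
            · intro u hu
              simp only [Finset.mem_filter, Finset.mem_univ, true_and]
              exact (Finset.mem_Ico.mp hu).1
            · intro k hk; rfl
            · intro u hu; rfl
            · intro k hk; rfl
        _ = ∑ u ∈ Finset.Ico t m, B ^ c * ((u : ℝ) + 1) ^ (-c : ℝ) := by
            apply Finset.sum_congr rfl
            intro u _
            have hu0 : (0:ℝ) ≤ (u : ℝ) + 1 := by positivity
            rw [Real.div_rpow (le_of_lt hB0) hu0, Real.rpow_neg hu0, div_eq_mul_inv]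
        _ = B ^ c * ∑ u ∈ Finset.Ico t m, ((u : ℝ) + 1) ^ (-c : ℝ) := by
            rw [Finset.mul_sum]
        _ ≤ B ^ c * ((1/(c-1)) * (t:ℝ) ^ (1-c)) := by
            apply mul_le_mul_of_nonneg_left (TailHit.tail_sum_le hcgt t m ht1)
              (Real.rpow_nonneg (le_of_lt hB0) c)
    have harith : B ^ c * ((1/(c-1)) * (t:ℝ) ^ (1-c)) ≤ ε := by
      have h043 : (0:ℝ) ≤ 4/β := by positivity
      have eB : B ^ c = (4/β) ^ ((w:ℝ) * c) := by
        rw [hBdef, ← Real.rpow_natCast (4/β) w, ← Real.rpow_mul h043]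
      have bound1 : (2:ℝ) ≤ 4 ^ (c-1) := by
        have h42 : ((4:ℝ)) ^ ((1/2 : ℝ)) = 2 := by
          rw [show (4:ℝ) = (2:ℝ) ^ ((2:ℕ) : ℝ) from by rw [Real.rpow_natCast]; norm_num]
          rw [← Real.rpow_mul (by norm_num : (0:ℝ) ≤ 2)]
          norm_num
        calc (2:ℝ) = 4 ^ ((1/2) : ℝ) := h42.symm
          _ ≤ 4 ^ (c-1) := Real.rpow_le_rpow_of_exponent_le (by norm_num) hc1
      have hc1e : c - 1 = (1-β)/(2*β) := by rw [hcdef]; field_simp; ring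
      have bound2 : (1/ε : ℝ) ≤ ((1/ε) ^ (4*β)) ^ (c-1) := by
        rw [← Real.rpow_mul (by positivity : (0:ℝ) ≤ 1/ε)]
        have he : 4*β*(c-1) = 2*(1-β) := by rw [hc1e]; field_simp; ring
        rw [he]
        calc (1/ε : ℝ) = (1/ε) ^ (1:ℝ) := (Real.rpow_one _).symm
          _ ≤ (1/ε) ^ (2*(1-β)) := Real.rpow_le_rpow_of_exponent_le h1ε (by linarith)
      have bound3 : (4/β : ℝ) ^ ((w:ℝ)*c) ≤ ((4/β) ^ (3*w)) ^ (c-1) := by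
        rw [← Real.rpow_natCast (4/β) (3*w), ← Real.rpow_mul h043]
        apply Real.rpow_le_rpow_of_exponent_le h4β
        push_cast
        nlinarith [Nat.cast_nonneg (α := ℝ) w, hc1,
          mul_nonneg (Nat.cast_nonneg (α := ℝ) w) (by linarith : (0:ℝ) ≤ 2*c - 3)]
      have ht0' : (0:ℝ) < 4 * (1/ε) ^ (4*β) * (4/β) ^ (3*w) := by positivity
      have hTge : (4 * (1/ε) ^ (4*β) * (4/β) ^ (3*w)) ^ (c-1) ≤ (t:ℝ) ^ (c-1) :=
        Real.rpow_le_rpow (le_of_lt ht0') ht (by linarith)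
      have hsplit : (4 * (1/ε) ^ (4*β) * (4/β) ^ (3*w)) ^ (c-1)
          = 4 ^ (c-1) * ((1/ε) ^ (4*β)) ^ (c-1) * ((4/β) ^ (3*w)) ^ (c-1) := by
        rw [Real.mul_rpow (by positivity) (by positivity),
          Real.mul_rpow (by positivity) (by positivity)]
      have hlower : 2 * ((1/ε) * ((4/β) ^ ((w:ℝ)*c))) ≤ (t:ℝ) ^ (c-1) := by
        calc 2 * ((1/ε) * ((4/β) ^ ((w:ℝ)*c)))
            ≤ 4 ^ (c-1) * (((1/ε) ^ (4*β)) ^ (c-1) * ((4/β) ^ (3*w)) ^ (c-1)) := by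
              apply mul_le_mul bound1 _ (by positivity) (by positivity)
              apply mul_le_mul bound2 bound3 (by positivity) (by positivity)
          _ = 4 ^ (c-1) * ((1/ε) ^ (4*β)) ^ (c-1) * ((4/β) ^ (3*w)) ^ (c-1) := by ring
          _ = (4 * (1/ε) ^ (4*β) * (4/β) ^ (3*w)) ^ (c-1) := hsplit.symm
          _ ≤ (t:ℝ) ^ (c-1) := hTge
      have hεne : ε ≠ 0 := ne_of_gt hε
      have hXgen : ∀ X : ℝ, X = ε * ((1/2) * (2 * ((1/ε) * X))) := by
        intro X
        have e : ε * ((1/2) * (2 * ((1/ε) * X))) = (ε * (1/ε)) * X := by ring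
        rw [e, mul_one_div, div_self hεne, one_mul]
      have hkey : B ^ c ≤ ε * ((c-1) * (t:ℝ) ^ (c-1)) := by
        calc B ^ c = (4/β) ^ ((w:ℝ)*c) := eB
          _ = ε * ((1/2) * (2 * ((1/ε) * ((4/β) ^ ((w:ℝ)*c))))) := hXgen _
          _ ≤ ε * ((c-1) * (t:ℝ) ^ (c-1)) := by
              apply mul_le_mul_of_nonneg_left _ (le_of_lt hε)
              apply mul_le_mul hc1 hlower (by positivity) (by linarith)
      have e1c : (t:ℝ) ^ (1-c) = ((t:ℝ) ^ (c-1))⁻¹ := by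
        rw [show (1-c) = -(c-1) from by ring, Real.rpow_neg (le_of_lt htpos)]
      have hdivform : ∀ X Y : ℝ, X * ((1/(c-1)) * Y⁻¹) = X / ((c-1) * Y) := by
        intro X Y
        rw [one_div, div_eq_mul_inv, mul_inv]
      rw [e1c, hdivform, div_le_iff₀ (mul_pos hc0 hTc1pos)]
      linarith [hkey]
    exact le_trans tb harith
  · -- trivial case : ε > 1
    calc (∑ k ∈ Finset.univ.filter (fun k : Fin m => t ≤ k.val), pL C (j k).val)
        ≤ ∑ k : Fin m, pL C (j k).val :=
          Finset.sum_le_sum_of_subset_of_nonneg (Finset.subset_univ _)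
            (fun k _ _ => TailHit.pL_nonneg C _)
      _ = ∑ i : Fin m, pL C i.val :=
          Function.Bijective.sum_comp hjbij (fun i => pL C i.val)
      _ ≤ 1 := TailHit.sum_pL_le_one C
      _ ≤ ε := le_of_lt hε1
end
end
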